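/- Let G be a cubic graph with vertex ordering v_1,…,v_n (n ≥ 4) and edge ordering e_1,…,e_m, let the parameters be q' = 5n² + 1, p' = 11n² + 6n, q = 12n² + 12n + 1, p = 25n² + 30n, and let G' be the reduction graph. Let [A,B] be a maximum cut of G'. Then for each vertex v_i ∈ V(G), if K''_i ⊆ A, then every link vertex associated with v_i belongs to B. -/

import Mathlib

/-- The vertices of the reduction graph `G'`: for each `i ∈ [n]` a `(p,q)`-grained
gadget `H_i` with parts `K'_i` (`vK1`), `K''_i` (`vK2`), `S'_i` (`vS1`), `S''_i` (`vS2`);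
for each `j ∈ [m]` a `(p',q')`-grained gadget `E_j` with parts `K'ᵉ_j` (`eK1`),
`K''ᵉ_j` (`eK2`), `S'ᵉ_j` (`eS1`), `S''ᵉ_j` (`eS2`); and for each `j ∈ [m]` four link
vertices `link lr s j`, where `lr = false` selects the smaller endpoint index of the
edge `e_j` and `lr = true` the larger one, and `s` distinguishes `L¹` (`s = false`)
from `L²` (`s = true`). -/
inductive RVert (n m p q p' q' : ℕ) : Type where
  | vK1 : Fin n → Fin q → RVert n m p q p' q'
  | vK2 : Fin n → Fin q → RVert n m p q p' q'
  | vS1 : Fin n → Fin p → RVert n m p q p' q'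
  | vS2 : Fin n → Fin p → RVert n m p q p' q'
  | eK1 : Fin m → Fin q' → RVert n m p q p' q'
  | eK2 : Fin m → Fin q' → RVert n m p q p' q'
  | eS1 : Fin m → Fin p' → RVert n m p q p' q'
  | eS2 : Fin m → Fin p' → RVert n m p q p' q'
  | link : Bool → Bool → Fin m → RVert n m p q p' q'
  deriving DecidableEq

/-- Given the two endpoint functions `ep1 ep2 : Fin m → Fin n` of the ordered edges
(`ep1 j < ep2 j`), the vertex index associated with the link vertex `link lr s j`. -/
def linkIdx {n m : ℕ} (ep1 ep2 : Fin m → Fin n) (lr : Bool) (j : Fin m) : Fin n :=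
  if lr then ep2 j else ep1 j

/-- One-directional description of the adjacencies of the reduction graph `G'`. -/
def radj {n m p q p' q' : ℕ} (ep1 ep2 : Fin m → Fin n) :
    RVert n m p q p' q' → RVert n m p q p' q' → Prop
  | .vK1 i _, .vK1 i' _ => i = i'
  | .vK1 i _, .vK2 i' _ => i = i'
  | .vK2 i _, .vK2 i' _ => i = i'
  | .vK1 i _, .vS1 i' _ => i = i'
  | .vK2 i _, .vS2 i' _ => i = i'
  | .eK1 j _, .eK1 j' _ => j = j'
  | .eK1 j _, .eK2 j' _ => j = j'
  | .eK2 j _, .eK2 j' _ => j = j'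
  | .eK1 j _, .eS1 j' _ => j = j'
  | .eK2 j _, .eS2 j' _ => j = j'
  | .link lr _ j, .vK1 k _ => linkIdx ep1 ep2 lr j < k
  | .link lr _ j, .vK2 k _ => linkIdx ep1 ep2 lr j ≤ k
  | .link lr _ j, .vS1 k _ => linkIdx ep1 ep2 lr j < k
  | .link lr _ j, .vS2 k _ => linkIdx ep1 ep2 lr j < k
  | .link _ _ j, .eK1 l _ => l ≤ j
  | .link _ _ j, .eK2 l _ => l < j
  | .link lr _ j, .eS1 l _ => l < j ∨ (l = j ∧ lr = false)
  | .link _ _ j, .eS2 l _ => l < j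
  | .link lr _ j, .link lr' _ l =>
      (linkIdx ep1 ep2 lr j < linkIdx ep1 ep2 lr' l ∧ l ≤ j) ∨
      (linkIdx ep1 ep2 lr' l < linkIdx ep1 ep2 lr j ∧ j ≤ l) ∨
      (linkIdx ep1 ep2 lr j = linkIdx ep1 ep2 lr' l ∧ j = l)
  | _, _ => False

/-- The reduction graph `G'`. -/
def reductionGraph (n m p q p' q' : ℕ) (ep1 ep2 : Fin m → Fin n) :
    SimpleGraph (RVert n m p q p' q') where
  Adj u v := u ≠ v ∧ (radj ep1 ep2 u v ∨ radj ep1 ep2 v u)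
  symm := ⟨fun u v h => ⟨h.1.symm, h.2.symm⟩⟩
  loopless := ⟨fun u h => h.1 rfl⟩


/-- Size of the cut-set of the cut `[A,B]`. -/
noncomputable def cutSize {V : Type} (G : SimpleGraph V) (A B : Set V) : ℕ :=
  {p : V × V | p.1 ∈ A ∧ p.2 ∈ B ∧ G.Adj p.1 p.2}.ncard

/-- `[A,B]` is a maximum cut of `G`. -/
def IsMaxCut {V : Type} (G : SimpleGraph V) (A B : Set V) : Prop :=
  A ∪ B = Set.univ ∧ Disjoint A B ∧
    ∀ A' B' : Set V, A' ∪ B' = Set.univ → Disjoint A' B' →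
      cutSize G A' B' ≤ cutSize G A B

namespace MCAux

open Finset

variable {n m p q p' q' : ℕ}

def rvEquiv : ((Fin n × Fin q) ⊕ (Fin n × Fin q) ⊕ (Fin n × Fin p) ⊕ (Fin n × Fin p) ⊕
    (Fin m × Fin q') ⊕ (Fin m × Fin q') ⊕ (Fin m × Fin p') ⊕ (Fin m × Fin p') ⊕
    (Bool × Bool × Fin m)) ≃ RVert n m p q p' q' where
  toFun x := match x with
    | .inl (i,a) => .vK1 i a
    | .inr (.inl (i,a)) => .vK2 i a
    | .inr (.inr (.inl (i,a))) => .vS1 i a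
    | .inr (.inr (.inr (.inl (i,a)))) => .vS2 i a
    | .inr (.inr (.inr (.inr (.inl (l,c))))) => .eK1 l c
    | .inr (.inr (.inr (.inr (.inr (.inl (l,c)))))) => .eK2 l c
    | .inr (.inr (.inr (.inr (.inr (.inr (.inl (l,c))))))) => .eS1 l c
    | .inr (.inr (.inr (.inr (.inr (.inr (.inr (.inl (l,c)))))))) => .eS2 l c
    | .inr (.inr (.inr (.inr (.inr (.inr (.inr (.inr (lr,s,j)))))))) => .link lr s j
  invFun v := match v with
    | .vK1 i a => .inl (i,a)
    | .vK2 i a => .inr (.inl (i,a))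
    | .vS1 i a => .inr (.inr (.inl (i,a)))
    | .vS2 i a => .inr (.inr (.inr (.inl (i,a))))
    | .eK1 l c => .inr (.inr (.inr (.inr (.inl (l,c)))))
    | .eK2 l c => .inr (.inr (.inr (.inr (.inr (.inl (l,c))))))
    | .eS1 l c => .inr (.inr (.inr (.inr (.inr (.inr (.inl (l,c)))))))
    | .eS2 l c => .inr (.inr (.inr (.inr (.inr (.inr (.inr (.inl (l,c))))))))
    | .link lr s j => .inr (.inr (.inr (.inr (.inr (.inr (.inr (.inr (lr,s,j))))))))
  left_inv x := by
    rcases x with ⟨i,a⟩|⟨i,a⟩|⟨i,a⟩|⟨i,a⟩|⟨l,c⟩|⟨l,c⟩|⟨l,c⟩|⟨l,c⟩|⟨lr,s,j⟩ <;> rfl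
  right_inv v := by cases v <;> rfl

instance : Fintype (RVert n m p q p' q') := Fintype.ofEquiv _ rvEquiv

lemma sum_rv (f : RVert n m p q p' q' → ℤ) :
    ∑ v, f v =
      ((∑ i : Fin n, ∑ a : Fin q, f (.vK1 i a)) + (∑ i : Fin n, ∑ a : Fin q, f (.vK2 i a)) +
      (∑ i : Fin n, ∑ a : Fin p, f (.vS1 i a)) + (∑ i : Fin n, ∑ a : Fin p, f (.vS2 i a)) +
      (∑ l : Fin m, ∑ c : Fin q', f (.eK1 l c)) + (∑ l : Fin m, ∑ c : Fin q', f (.eK2 l c)) +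
      (∑ l : Fin m, ∑ c : Fin p', f (.eS1 l c)) + (∑ l : Fin m, ∑ c : Fin p', f (.eS2 l c)) +
      (∑ lr : Bool, ∑ s : Bool, ∑ j : Fin m, f (.link lr s j))) := by
  rw [← Equiv.sum_comp (rvEquiv (n := n) (m := m) (p := p) (q := q) (p' := p') (q' := q')) f]
  simp only [Fintype.sum_sum_type, Fintype.sum_prod_type, rvEquiv, Equiv.coe_fn_mk]
  ring

end MCAux
namespace MCAux

open Finset

section Cut

open scoped Classical

variable {V : Type} [Fintype V] [DecidableEq V] (G : SimpleGraph V)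

/-- side sign of a vertex -/
noncomputable def sgn (A : Set V) (v : V) : ℤ := if v ∈ A then 1 else -1

/-- edge weight: sign product on adjacent pairs -/
noncomputable def Wg (A : Set V) (u v : V) : ℤ :=
  if G.Adj u v then sgn A u * sgn A v else 0

lemma sgn_abs (A : Set V) (v : V) : |sgn A v| ≤ 1 := by
  unfold sgn; split <;> simp

lemma sgn_cases (A : Set V) (v : V) : sgn A v = 1 ∨ sgn A v = -1 := by
  unfold sgn; split <;> simp

lemma sgn_of_mem {A : Set V} {v : V} (h : v ∈ A) : sgn A v = 1 := if_pos h

lemma sgn_of_not_mem {A : Set V} {v : V} (h : v ∉ A) : sgn A v = -1 := if_neg h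

lemma sgn_sq (A : Set V) (v : V) : sgn A v * sgn A v = 1 := by
  unfold sgn; split <;> ring

lemma Wg_symm (A : Set V) (u v : V) : Wg G A u v = Wg G A v u := by
  unfold Wg
  by_cases h : G.Adj u v
  · rw [if_pos h, if_pos h.symm]; ring
  · rw [if_neg h, if_neg (fun h' => h h'.symm)]

lemma Wg_self (A : Set V) (u : V) : Wg G A u u = 0 := by
  unfold Wg; rw [if_neg (G.loopless.irrefl u)]

private lemma sym_sum_eq {f g : V → V → ℤ}
    (h : ∀ u v, f u v + f v u = g u v + g v u) :
    ∑ u : V, ∑ v : V, f u v = ∑ u : V, ∑ v : V, g u v := by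
  have h2 : (2:ℤ) * (∑ u : V, ∑ v : V, f u v) = 2 * (∑ u : V, ∑ v : V, g u v) := by
    have hf : ∑ u : V, ∑ v : V, f u v = ∑ u : V, ∑ v : V, f v u := Finset.sum_comm
    have hg : ∑ u : V, ∑ v : V, g u v = ∑ u : V, ∑ v : V, g v u := Finset.sum_comm
    calc (2:ℤ) * (∑ u : V, ∑ v : V, f u v)
        = (∑ u : V, ∑ v : V, f u v) + (∑ u : V, ∑ v : V, f v u) := by rw [← hf]; ring
      _ = ∑ u : V, ∑ v : V, (f u v + f v u) := by
          rw [← Finset.sum_add_distrib]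
          exact Finset.sum_congr rfl fun u _ => (Finset.sum_add_distrib).symm
      _ = ∑ u : V, ∑ v : V, (g u v + g v u) := by
          exact Finset.sum_congr rfl fun u _ => Finset.sum_congr rfl fun v _ => h u v
      _ = (∑ u : V, ∑ v : V, g u v) + (∑ u : V, ∑ v : V, g v u) := by
          rw [← Finset.sum_add_distrib]
          exact Finset.sum_congr rfl fun u _ => Finset.sum_add_distrib
      _ = 2 * (∑ u : V, ∑ v : V, g u v) := by rw [← hg]; ring
  exact mul_left_cancel₀ two_ne_zero h2

lemma cut_eq (A : Set V) :
    (cutSize G A Aᶜ : ℤ) * 4 =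
      (∑ u : V, ∑ v : V, if G.Adj u v then (1:ℤ) else 0) - ∑ u : V, ∑ v : V, Wg G A u v := by
  have hcard : cutSize G A Aᶜ =
      (univ.filter fun pp : V × V => pp.1 ∈ A ∧ pp.2 ∈ Aᶜ ∧ G.Adj pp.1 pp.2).card := by
    unfold cutSize
    rw [Set.ncard_eq_toFinset_card']
    congr 1
    ext pp
    simp
  rw [hcard, Finset.card_filter]
  push_cast
  rw [Fintype.sum_prod_type]
  show (∑ u : V, ∑ v : V, if (u ∈ A ∧ v ∈ Aᶜ ∧ G.Adj u v) then (1:ℤ) else 0) * 4 = _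
  have key := sym_sum_eq (V := V)
    (f := fun u v => (if (u ∈ A ∧ v ∈ Aᶜ ∧ G.Adj u v) then (1:ℤ) else 0) * 4)
    (g := fun u v => (if G.Adj u v then (1:ℤ) else 0) - Wg G A u v)
    (by
      intro u v
      unfold Wg sgn
      by_cases hadj : G.Adj u v
      · have hadj' : G.Adj v u := hadj.symm
        have hne : u ≠ v := G.ne_of_adj hadj
        by_cases hu : u ∈ A <;> by_cases hv : v ∈ A <;>
          simp [hadj, hadj', hu, hv, Set.mem_compl_iff] <;> ring
      · have hadj' : ¬ G.Adj v u := fun h => hadj h.symm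
        simp [hadj, hadj'])
  calc (∑ u : V, ∑ v : V, (if (u ∈ A ∧ v ∈ Aᶜ ∧ G.Adj u v) then (1:ℤ) else 0)) * 4
      = ∑ u : V, ∑ v : V, (if (u ∈ A ∧ v ∈ Aᶜ ∧ G.Adj u v) then (1:ℤ) else 0) * 4 := by
        rw [Finset.sum_mul]
        exact Finset.sum_congr rfl fun u _ => Finset.sum_mul _ _ _
    _ = ∑ u : V, ∑ v : V, ((if G.Adj u v then (1:ℤ) else 0) - Wg G A u v) := key
    _ = (∑ u : V, ∑ v : V, if G.Adj u v then (1:ℤ) else 0) - ∑ u : V, ∑ v : V, Wg G A u v := by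
        rw [← Finset.sum_sub_distrib]
        exact Finset.sum_congr rfl fun u _ => Finset.sum_sub_distrib _ _

/-- THE master inequality: in a max cut, flipping any finite set `M` does not increase
the cut, which in sign terms says the total `Wg`-weight from `M` to its complement
is nonpositive. -/
lemma master {A B : Set V} (hmax : IsMaxCut G A B) (M : Finset V) :
    ∑ u ∈ M, ∑ v ∈ Mᶜ, Wg G A u v ≤ 0 := by
  have hBc : B = Aᶜ := by
    have h1 := hmax.1
    have h2 := hmax.2.1
    ext v
    constructor
    · intro hv
      exact fun hvA => (Set.disjoint_left.mp h2 hvA) hv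
    · intro hv
      rcases (Set.ext_iff.mp h1 v).2 trivial with h | h
      · exact absurd h hv
      · exact h
  -- the flipped cut
  set A' : Set V := (A \ ↑M) ∪ (↑M \ A) with hA'
  have hsgn' : ∀ v : V, sgn A' v = (if v ∈ M then -1 else 1) * sgn A v := by
    intro v
    unfold sgn
    by_cases hv : v ∈ M <;> by_cases hvA : v ∈ A <;>
      simp [hA', hv, hvA]
  have hmle := hmax.2.2 A' A'ᶜ (Set.union_compl_self A') (disjoint_compl_right)
  rw [hBc] at hmle
  have h4 : (cutSize G A' A'ᶜ : ℤ) * 4 ≤ (cutSize G A Aᶜ : ℤ) * 4 := by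
    have : (cutSize G A' A'ᶜ : ℤ) ≤ (cutSize G A Aᶜ : ℤ) := by exact_mod_cast hmle
    linarith
  rw [cut_eq, cut_eq] at h4
  -- so ∑∑ Wg A ≤ ∑∑ Wg A'
  have hW : (∑ u : V, ∑ v : V, Wg G A u v) ≤ ∑ u : V, ∑ v : V, Wg G A' u v := by linarith
  -- decompose the difference
  have hdiff : (∑ u : V, ∑ v : V, Wg G A' u v)
      = (∑ u : V, ∑ v : V, Wg G A u v) - 4 * ∑ u ∈ M, ∑ v ∈ Mᶜ, Wg G A u v := by
    have hWg' : ∀ u v : V, Wg G A' u v =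
        ((if u ∈ M then -1 else 1) * (if v ∈ M then -1 else 1)) * Wg G A u v := by
      intro u v
      unfold Wg
      by_cases hadj : G.Adj u v
      · rw [if_pos hadj, if_pos hadj, hsgn' u, hsgn' v]; ring
      · rw [if_neg hadj, if_neg hadj]; ring
    have hsplit : ∀ f : V → V → ℤ, (∑ u : V, ∑ v : V, f u v)
        = (∑ u ∈ M, ∑ v ∈ M, f u v) + (∑ u ∈ M, ∑ v ∈ Mᶜ, f u v)
          + (∑ u ∈ Mᶜ, ∑ v ∈ M, f u v) + (∑ u ∈ Mᶜ, ∑ v ∈ Mᶜ, f u v) := by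
      intro f
      have hu : ∀ u : V, (∑ v : V, f u v) = (∑ v ∈ M, f u v) + (∑ v ∈ Mᶜ, f u v) := by
        intro u
        rw [← Finset.sum_add_sum_compl M (f u)]
      calc (∑ u : V, ∑ v : V, f u v)
          = (∑ u ∈ M, ∑ v : V, f u v) + (∑ u ∈ Mᶜ, ∑ v : V, f u v) :=
            (Finset.sum_add_sum_compl M _).symm
        _ = _ := by
            rw [Finset.sum_congr rfl fun u _ => hu u, Finset.sum_congr rfl fun u _ => hu u,
              Finset.sum_add_distrib, Finset.sum_add_distrib]
            ring
    rw [hsplit (Wg G A'), hsplit (Wg G A)]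
    have e1 : (∑ u ∈ M, ∑ v ∈ M, Wg G A' u v) = (∑ u ∈ M, ∑ v ∈ M, Wg G A u v) := by
      apply Finset.sum_congr rfl; intro u hu; apply Finset.sum_congr rfl; intro v hv
      rw [hWg' u v, if_pos (by simpa using hu), if_pos (by simpa using hv)]; ring
    have e2 : (∑ u ∈ Mᶜ, ∑ v ∈ Mᶜ, Wg G A' u v) = (∑ u ∈ Mᶜ, ∑ v ∈ Mᶜ, Wg G A u v) := by
      apply Finset.sum_congr rfl; intro u hu; apply Finset.sum_congr rfl; intro v hv
      rw [hWg' u v, if_neg (by simpa using hu), if_neg (by simpa using hv)]; ring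
    have e3 : (∑ u ∈ M, ∑ v ∈ Mᶜ, Wg G A' u v) = -(∑ u ∈ M, ∑ v ∈ Mᶜ, Wg G A u v) := by
      rw [← Finset.sum_neg_distrib]
      apply Finset.sum_congr rfl; intro u hu
      rw [← Finset.sum_neg_distrib]
      apply Finset.sum_congr rfl; intro v hv
      rw [hWg' u v, if_pos (by simpa using hu), if_neg (by simpa using hv)]; ring
    have e4 : (∑ u ∈ Mᶜ, ∑ v ∈ M, Wg G A' u v) = -(∑ u ∈ Mᶜ, ∑ v ∈ M, Wg G A u v) := by
      rw [← Finset.sum_neg_distrib]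
      apply Finset.sum_congr rfl; intro u hu
      rw [← Finset.sum_neg_distrib]
      apply Finset.sum_congr rfl; intro v hv
      rw [hWg' u v, if_neg (by simpa using hu), if_pos (by simpa using hv)]; ring
    have e5 : (∑ u ∈ Mᶜ, ∑ v ∈ M, Wg G A u v) = (∑ u ∈ M, ∑ v ∈ Mᶜ, Wg G A u v) := by
      rw [Finset.sum_comm]
      exact Finset.sum_congr rfl fun u _ => Finset.sum_congr rfl fun v _ => Wg_symm G A v u
    rw [e1, e2, e3, e4, e5]
    ring
  rw [hdiff] at hW
  linarith

end Cut

end MCAux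
namespace MCAux

/-- Abstract grained-gadget analysis in a maximum cut, purely arithmetic. -/
lemma gadget_main (N P Q t eK1 eK2 eS1 eS2 α β σ1 σ2 : ℤ)
    (hN : 4 ≤ N)
    (hQ : 6*N + 10 ≤ Q)
    (hP : 2*Q + 6*N + 8 ≤ P)
    (hbig : 6*N*(P - Q) + 6*Q < Q*Q)
    (he : |eK1| + |eK2| + |eS1| + |eS2| ≤ 6)
    (heS2 : eS2 = 0)
    (ht : |t| ≤ 6*N)
    (hα : |α| ≤ Q) (hβ : |β| ≤ Q) (hσ1 : |σ1| ≤ P) (hσ2 : |σ2| ≤ P)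
    (h1 : α ≠ -Q → α+β+σ1+t+eK1 ≤ 1)
    (h2 : α ≠ Q → -1 ≤ α+β+σ1+t+eK1)
    (h3 : β ≠ -Q → α+β+σ2+t+eK2 ≤ 1)
    (h4 : β ≠ Q → -1 ≤ α+β+σ2+t+eK2)
    (h5 : σ1 ≠ -P → α+t+eS1 ≤ 0)
    (h6 : σ1 ≠ P → 0 ≤ α+t+eS1)
    (h7 : σ2 ≠ -P → β+t+eS2 ≤ 0)
    (h8 : σ2 ≠ P → 0 ≤ β+t+eS2)
    (h9 : α ≠ -Q → σ1 ≠ P → β+σ1+eK1-eS1 ≤ -1)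
    (h10 : σ1 ≠ -P → α ≠ Q → 1 ≤ β+σ1+eK1-eS1)
    (h11 : β ≠ -Q → σ2 ≠ P → α+σ2+eK2-eS2 ≤ -1)
    (h12 : σ2 ≠ -P → β ≠ Q → 1 ≤ α+σ2+eK2-eS2)
    (h13 : β = Q → σ2 = -P → Q*α + t*(Q-P) + Q*eK2 - P*eS2 ≤ 0) :
    -8 ≤ α+β+σ1+σ2 ∧ Q - P ≤ α + σ1 := by
  obtain ⟨hα1, hα2⟩ := abs_le.mp hα
  obtain ⟨hβ1, hβ2⟩ := abs_le.mp hβ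
  obtain ⟨hσ11, hσ12⟩ := abs_le.mp hσ1
  obtain ⟨hσ21, hσ22⟩ := abs_le.mp hσ2
  obtain ⟨ht1, ht2⟩ := abs_le.mp ht
  have hek1a : eK1 ≤ 6 := by
    have := le_abs_self eK1
    have := abs_nonneg eK2; have := abs_nonneg eS1; have := abs_nonneg eS2
    linarith
  have hek1b : -6 ≤ eK1 := by
    have := neg_abs_le eK1
    have := abs_nonneg eK2; have := abs_nonneg eS1; have := abs_nonneg eS2
    linarith
  have hek2a : eK2 ≤ 6 := by
    have := le_abs_self eK2
    have := abs_nonneg eK1; have := abs_nonneg eS1; have := abs_nonneg eS2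
    linarith
  have hek2b : -6 ≤ eK2 := by
    have := neg_abs_le eK2
    have := abs_nonneg eK1; have := abs_nonneg eS1; have := abs_nonneg eS2
    linarith
  have hes1a : eS1 ≤ 6 := by
    have := le_abs_self eS1
    have := abs_nonneg eK1; have := abs_nonneg eK2; have := abs_nonneg eS2
    linarith
  have hes1b : -6 ≤ eS1 := by
    have := neg_abs_le eS1
    have := abs_nonneg eK1; have := abs_nonneg eK2; have := abs_nonneg eS2
    linarith
  subst heS2
  rw [abs_zero] at he
  have hcomb : eK1 + eK2 - eS1 ≤ 6 := by
    have := le_abs_self eK1; have := le_abs_self eK2; have := neg_abs_le eS1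
    linarith
  by_cases hs1P : σ1 = P
  · -- σ1 = P
    by_cases hs2P : σ2 = P
    · -- C5
      subst hs1P; subst hs2P
      constructor <;> linarith
    by_cases hs2mP : σ2 = -P
    · -- C6
      have hA : α = -Q := by
        by_contra hA
        have := h1 hA
        rw [hs1P] at this
        linarith
      have hB : β = Q := by
        by_contra hB
        have := h4 hB
        rw [hs2mP] at this
        linarith
      rw [hA, hB, hs1P, hs2mP]
      constructor <;> linarith
    · -- C4 : σ2 split
      have hb7 := h7 hs2mP
      have hb8 := h8 hs2P
      have hβQ : β ≠ Q := by intro h; rw [h] at hb7; linarith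
      have hβmQ : β ≠ -Q := by intro h; rw [h] at hb8; linarith
      have hA : α = -Q := by
        by_contra hA
        have := h1 hA
        rw [hs1P] at this
        linarith
      have hc3 := h3 hβmQ
      have hc4 := h4 hβQ
      constructor
      · rw [hA, hs1P]; linarith
      · rw [hA, hs1P]; linarith
  by_cases hs1mP : σ1 = -P
  · -- σ1 = -P
    by_cases hs2P : σ2 = P
    · -- C8
      have hA : α = Q := by
        by_contra hA
        have := h2 hA
        rw [hs1mP] at this
        linarith
      have hB : β = -Q := by
        by_contra hB
        have := h3 hB
        rw [hs2P] at this
        linarith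
      rw [hA, hB, hs1mP, hs2P]
      constructor <;> linarith
    by_cases hs2mP : σ2 = -P
    · -- C9
      have hA : α = Q := by
        by_contra hA
        have := h2 hA
        rw [hs1mP] at this
        linarith
      have hB : β = Q := by
        by_contra hB
        have := h4 hB
        rw [hs2mP] at this
        linarith
      exfalso
      have h13' := h13 hB hs2mP
      rw [hA] at h13'
      have hPQ : (0:ℤ) ≤ P - Q := by linarith
      have ht6 : t*(P-Q) ≤ 6*N*(P-Q) := mul_le_mul_of_nonneg_right (by linarith) hPQ
      have hqe : Q*(-6) ≤ Q*eK2 := mul_le_mul_of_nonneg_left (by linarith) (by linarith)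
      have hrw : t*(Q-P) = -(t*(P-Q)) := by ring
      rw [hrw] at h13'
      have hq6 : Q*(-6) = -(6*Q) := by ring
      linarith
    · -- C7 : σ2 split
      have hb7 := h7 hs2mP
      have hb8 := h8 hs2P
      have hβQ : β ≠ Q := by intro h; rw [h] at hb7; linarith
      have hβmQ : β ≠ -Q := by intro h; rw [h] at hb8; linarith
      have hA : α = Q := by
        by_contra hA
        have := h2 hA
        rw [hs1mP] at this
        linarith
      exfalso
      have hc11 := h11 hβmQ hs2P
      have hc12 := h12 hs2mP hβQ
      rw [hA] at hc11 hc12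
      linarith
  · -- σ1 split
    have hb5 := h5 hs1mP
    have hb6 := h6 hs1P
    have hαQ : α ≠ Q := by intro h; rw [h] at hb5; linarith
    have hαmQ : α ≠ -Q := by intro h; rw [h] at hb6; linarith
    by_cases hs2P : σ2 = P
    · -- C2
      have hB : β = -Q := by
        by_contra hB
        have := h3 hB
        rw [hs2P] at this
        linarith
      have hc2 := h2 hαQ
      rw [hB] at hc2
      constructor
      · rw [hB, hs2P]; linarith
      · linarith
    by_cases hs2mP : σ2 = -P
    · -- C3
      exfalso
      have hB : β = Q := by
        by_contra hB
        have := h4 hB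
        rw [hs2mP] at this
        linarith
      have hc9 := h9 hαmQ hs1P
      have hc10 := h10 hs1mP hαQ
      rw [hB] at hc9 hc10
      linarith
    · -- C1
      have hb7 := h7 hs2mP
      have hb8 := h8 hs2P
      have hβQ : β ≠ Q := by intro h; rw [h] at hb7; linarith
      have hβmQ : β ≠ -Q := by intro h; rw [h] at hb8; linarith
      have hc1 := h1 hαmQ
      have hc2 := h2 hαQ
      have hc3 := h3 hβmQ
      have hc4 := h4 hβQ
      constructor <;> linarith

end MCAux
namespace MCAux

open Finset

section Acct

open scoped Classical

variable {n m p q p' q' : ℕ}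

lemma sum_erase_one {N : ℕ} (f : Fin N → ℤ) (a : Fin N) :
    (∑ x : Fin N, if a = x then 0 else f x) = (∑ x : Fin N, f x) - f a := by
  have hpt : ∀ x : Fin N, (if a = x then (0:ℤ) else f x) = f x - (if a = x then f x else 0) := by
    intro x; by_cases h : a = x <;> simp [h]
  rw [Finset.sum_congr rfl fun x _ => hpt x, Finset.sum_sub_distrib]
  simp

lemma abs_sgn_sum {ι : Type*} (s : Finset ι) (A : Set (RVert n m p q p' q'))
    (f : ι → RVert n m p q p' q') :
    |∑ x ∈ s, sgn A (f x)| ≤ s.card := by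
  calc |∑ x ∈ s, sgn A (f x)| ≤ ∑ x ∈ s, |sgn A (f x)| := Finset.abs_sum_le_sum_abs _ _
    _ ≤ ∑ x ∈ s, 1 := Finset.sum_le_sum fun x _ => sgn_abs A (f x)
    _ = s.card := by simp

variable (ep1 ep2 : Fin m → Fin n) (A : Set (RVert n m p q p' q'))

noncomputable def aK1 (k : Fin n) : ℤ := ∑ a : Fin q, sgn A (RVert.vK1 k a)
noncomputable def aK2 (k : Fin n) : ℤ := ∑ a : Fin q, sgn A (RVert.vK2 k a)
noncomputable def aS1 (k : Fin n) : ℤ := ∑ a : Fin p, sgn A (RVert.vS1 k a)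
noncomputable def aS2 (k : Fin n) : ℤ := ∑ a : Fin p, sgn A (RVert.vS2 k a)
noncomputable def bK1 (l : Fin m) : ℤ := ∑ c : Fin q', sgn A (RVert.eK1 l c)
noncomputable def bK2 (l : Fin m) : ℤ := ∑ c : Fin q', sgn A (RVert.eK2 l c)
noncomputable def bS1 (l : Fin m) : ℤ := ∑ c : Fin p', sgn A (RVert.eS1 l c)
noncomputable def bS2 (l : Fin m) : ℤ := ∑ c : Fin p', sgn A (RVert.eS2 l c)
noncomputable def tH (k : Fin n) : ℤ :=
  ∑ lr : Bool, ∑ s : Bool, ∑ j : Fin m,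
    if linkIdx ep1 ep2 lr j < k then sgn A (RVert.link lr s j) else 0
noncomputable def eH (k : Fin n) : ℤ :=
  ∑ lr : Bool, ∑ s : Bool, ∑ j : Fin m,
    if linkIdx ep1 ep2 lr j = k then sgn A (RVert.link lr s j) else 0
noncomputable def tE (l : Fin m) : ℤ :=
  ∑ lr : Bool, ∑ s : Bool, ∑ j : Fin m, if l < j then sgn A (RVert.link lr s j) else 0
noncomputable def xE (l : Fin m) : ℤ := ∑ lr : Bool, ∑ s : Bool, sgn A (RVert.link lr s l)
noncomputable def yE (l : Fin m) : ℤ := ∑ s : Bool, sgn A (RVert.link false s l)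

noncomputable def NB (u : RVert n m p q p' q') : ℤ :=
  ∑ v, (if (reductionGraph n m p q p' q' ep1 ep2).Adj u v then sgn A v else 0)

lemma SW_eq (u : RVert n m p q p' q') :
    (∑ v, Wg (reductionGraph n m p q p' q' ep1 ep2) A u v) = sgn A u * NB ep1 ep2 A u := by
  unfold NB Wg
  rw [Finset.mul_sum]
  exact Finset.sum_congr rfl fun v _ => by
    by_cases h : (reductionGraph n m p q p' q' ep1 ep2).Adj u v <;> simp [h]

lemma NB_vK1 (k : Fin n) (a : Fin q) :
    NB ep1 ep2 A (.vK1 k a) =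
      (aK1 A k - sgn A (.vK1 k a)) + aK2 A k + aS1 A k + tH ep1 ep2 A k := by
  unfold NB
  rw [sum_rv]
  have c1 : (∑ i : Fin n, ∑ aa : Fin q,
      if (reductionGraph n m p q p' q' ep1 ep2).Adj (.vK1 k a) (.vK1 i aa)
      then sgn A (.vK1 i aa) else 0) = aK1 A k - sgn A (.vK1 k a) := by
    rw [Finset.sum_congr rfl fun i _ => Finset.sum_congr rfl fun aa _ =>
      show (if (reductionGraph n m p q p' q' ep1 ep2).Adj (.vK1 k a) (.vK1 i aa)
          then sgn A (.vK1 i aa) else 0)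
        = if k = i then (if a = aa then 0 else sgn A (.vK1 i aa)) else 0 from by
        rcases eq_or_ne k i with h1 | h1
        · subst h1; by_cases h2 : a = aa <;> simp [reductionGraph, radj, h2]
        · have h1' : ¬ i = k := fun hh => h1 hh.symm
          simp [reductionGraph, radj, h1, h1']]
    rw [Finset.sum_congr rfl fun i _ =>
      show (∑ aa : Fin q, if k = i then (if a = aa then 0 else sgn A (.vK1 i aa)) else 0)
        = if k = i then (∑ aa : Fin q, if a = aa then 0 else sgn A (.vK1 i aa)) else 0 from by
        split <;> simp]
    rw [Finset.sum_ite_eq Finset.univ k]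
    simp [sum_erase_one (fun aa => sgn A (.vK1 k aa)) a, aK1]
  have c2 : (∑ i : Fin n, ∑ aa : Fin q,
      if (reductionGraph n m p q p' q' ep1 ep2).Adj (.vK1 k a) (.vK2 i aa)
      then sgn A (.vK2 i aa) else 0) = aK2 A k := by
    rw [Finset.sum_congr rfl fun i _ => Finset.sum_congr rfl fun aa _ =>
      show (if (reductionGraph n m p q p' q' ep1 ep2).Adj (.vK1 k a) (.vK2 i aa)
          then sgn A (.vK2 i aa) else 0)
        = if k = i then sgn A (.vK2 i aa) else 0 from by
        rcases eq_or_ne k i with h1 | h1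
        · subst h1; simp [reductionGraph, radj]
        · have h1' : ¬ i = k := fun hh => h1 hh.symm
          simp [reductionGraph, radj, h1, h1']]
    rw [Finset.sum_congr rfl fun i _ =>
      show (∑ aa : Fin q, if k = i then sgn A (.vK2 i aa) else 0)
        = if k = i then (∑ aa : Fin q, sgn A (.vK2 i aa)) else 0 from by
        split <;> simp]
    rw [Finset.sum_ite_eq Finset.univ k]
    simp [aK2]
  have c3 : (∑ i : Fin n, ∑ aa : Fin p,
      if (reductionGraph n m p q p' q' ep1 ep2).Adj (.vK1 k a) (.vS1 i aa)
      then sgn A (.vS1 i aa) else 0) = aS1 A k := by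
    rw [Finset.sum_congr rfl fun i _ => Finset.sum_congr rfl fun aa _ =>
      show (if (reductionGraph n m p q p' q' ep1 ep2).Adj (.vK1 k a) (.vS1 i aa)
          then sgn A (.vS1 i aa) else 0)
        = if k = i then sgn A (.vS1 i aa) else 0 from by
        rcases eq_or_ne k i with h1 | h1
        · subst h1; simp [reductionGraph, radj]
        · have h1' : ¬ i = k := fun hh => h1 hh.symm
          simp [reductionGraph, radj, h1, h1']]
    rw [Finset.sum_congr rfl fun i _ =>
      show (∑ aa : Fin p, if k = i then sgn A (.vS1 i aa) else 0)
        = if k = i then (∑ aa : Fin p, sgn A (.vS1 i aa)) else 0 from by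
        split <;> simp]
    rw [Finset.sum_ite_eq Finset.univ k]
    simp [aS1]
  have c4 : (∑ i : Fin n, ∑ aa : Fin p,
      if (reductionGraph n m p q p' q' ep1 ep2).Adj (.vK1 k a) (.vS2 i aa)
      then sgn A (.vS2 i aa) else 0) = 0 := by
    rw [Finset.sum_congr rfl fun i _ => Finset.sum_congr rfl fun aa _ =>
      show (if (reductionGraph n m p q p' q' ep1 ep2).Adj (.vK1 k a) (.vS2 i aa)
          then sgn A (.vS2 i aa) else 0) = 0 from by
        simp [reductionGraph, radj]]
    simp
  have c5 : (∑ l : Fin m, ∑ c : Fin q',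
      if (reductionGraph n m p q p' q' ep1 ep2).Adj (.vK1 k a) (.eK1 l c)
      then sgn A (.eK1 l c) else 0) = 0 := by
    rw [Finset.sum_congr rfl fun l _ => Finset.sum_congr rfl fun c _ =>
      show (if (reductionGraph n m p q p' q' ep1 ep2).Adj (.vK1 k a) (.eK1 l c)
          then sgn A (.eK1 l c) else 0) = 0 from by
        simp [reductionGraph, radj]]
    simp
  have c6 : (∑ l : Fin m, ∑ c : Fin q',
      if (reductionGraph n m p q p' q' ep1 ep2).Adj (.vK1 k a) (.eK2 l c)
      then sgn A (.eK2 l c) else 0) = 0 := by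
    rw [Finset.sum_congr rfl fun l _ => Finset.sum_congr rfl fun c _ =>
      show (if (reductionGraph n m p q p' q' ep1 ep2).Adj (.vK1 k a) (.eK2 l c)
          then sgn A (.eK2 l c) else 0) = 0 from by
        simp [reductionGraph, radj]]
    simp
  have c7 : (∑ l : Fin m, ∑ c : Fin p',
      if (reductionGraph n m p q p' q' ep1 ep2).Adj (.vK1 k a) (.eS1 l c)
      then sgn A (.eS1 l c) else 0) = 0 := by
    rw [Finset.sum_congr rfl fun l _ => Finset.sum_congr rfl fun c _ =>
      show (if (reductionGraph n m p q p' q' ep1 ep2).Adj (.vK1 k a) (.eS1 l c)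
          then sgn A (.eS1 l c) else 0) = 0 from by
        simp [reductionGraph, radj]]
    simp
  have c8 : (∑ l : Fin m, ∑ c : Fin p',
      if (reductionGraph n m p q p' q' ep1 ep2).Adj (.vK1 k a) (.eS2 l c)
      then sgn A (.eS2 l c) else 0) = 0 := by
    rw [Finset.sum_congr rfl fun l _ => Finset.sum_congr rfl fun c _ =>
      show (if (reductionGraph n m p q p' q' ep1 ep2).Adj (.vK1 k a) (.eS2 l c)
          then sgn A (.eS2 l c) else 0) = 0 from by
        simp [reductionGraph, radj]]
    simp
  have c9 : (∑ lr : Bool, ∑ s : Bool, ∑ j : Fin m,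
      if (reductionGraph n m p q p' q' ep1 ep2).Adj (.vK1 k a) (.link lr s j)
      then sgn A (.link lr s j) else 0) = tH ep1 ep2 A k := by
    unfold tH
    refine Finset.sum_congr rfl fun lr _ => Finset.sum_congr rfl fun s _ =>
      Finset.sum_congr rfl fun j _ => ?_
    by_cases h1 : linkIdx ep1 ep2 lr j < k <;> simp [reductionGraph, radj, h1]
  rw [c1, c2, c3, c4, c5, c6, c7, c8, c9]
  ring

end Acct

end MCAux
namespace MCAux
open Finset
section Acct2
open scoped Classical
variable {n m p q p' q' : ℕ} (ep1 ep2 : Fin m → Fin n) (A : Set (RVert n m p q p' q'))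

lemma NB_vK2 (k : Fin n) (a : Fin q) :
    NB ep1 ep2 A (.vK2 k a) =
      aK1 A k + (aK2 A k - sgn A (.vK2 k a)) + aS2 A k + tH ep1 ep2 A k + eH ep1 ep2 A k := by
  unfold NB
  rw [sum_rv]
  have c_vK1 : (∑ i : Fin n, ∑ aa : Fin q,
      if (reductionGraph n m p q p' q' ep1 ep2).Adj (RVert.vK2 k a) (.vK1 i aa)
      then sgn A (.vK1 i aa) else 0) = aK1 A k := by
    rw [Finset.sum_congr rfl fun i _ => Finset.sum_congr rfl fun aa _ =>
      show (if (reductionGraph n m p q p' q' ep1 ep2).Adj (RVert.vK2 k a) (.vK1 i aa)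
          then sgn A (.vK1 i aa) else 0)
        = if i = k then sgn A (.vK1 i aa) else 0 from by
        rcases eq_or_ne k i with h1 | h1
        · subst h1; simp [reductionGraph, radj]
        · have h1' : ¬ i = k := fun hh => h1 hh.symm
          simp [reductionGraph, radj, h1, h1']]
    rw [Finset.sum_congr rfl fun i _ =>
      show (∑ aa : Fin q, if i = k then sgn A (.vK1 i aa) else 0)
        = if i = k then (∑ aa : Fin q, sgn A (.vK1 i aa)) else 0 from by
        split <;> simp]
    rw [Finset.sum_ite_eq' Finset.univ k]
    simp [aK1]
  have c_vK2 : (∑ i : Fin n, ∑ aa : Fin q,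
      if (reductionGraph n m p q p' q' ep1 ep2).Adj (RVert.vK2 k a) (.vK2 i aa)
      then sgn A (.vK2 i aa) else 0) = aK2 A k - sgn A (RVert.vK2 k a) := by
    rw [Finset.sum_congr rfl fun i _ => Finset.sum_congr rfl fun aa _ =>
      show (if (reductionGraph n m p q p' q' ep1 ep2).Adj (RVert.vK2 k a) (.vK2 i aa)
          then sgn A (.vK2 i aa) else 0)
        = if k = i then (if a = aa then 0 else sgn A (.vK2 i aa)) else 0 from by
        rcases eq_or_ne k i with h1 | h1
        · subst h1; by_cases h2 : a = aa <;> simp [reductionGraph, radj, h2]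
        · have h1' : ¬ i = k := fun hh => h1 hh.symm
          simp [reductionGraph, radj, h1, h1']]
    rw [Finset.sum_congr rfl fun i _ =>
      show (∑ aa : Fin q, if k = i then (if a = aa then 0 else sgn A (.vK2 i aa)) else 0)
        = if k = i then (∑ aa : Fin q, if a = aa then 0 else sgn A (.vK2 i aa)) else 0 from by
        split <;> simp]
    rw [Finset.sum_ite_eq Finset.univ k]
    simp [sum_erase_one (fun aa => sgn A (.vK2 k aa)) a, aK2]
  have c_vS1 : (∑ i : Fin n, ∑ aa : Fin p,
      if (reductionGraph n m p q p' q' ep1 ep2).Adj (RVert.vK2 k a) (.vS1 i aa)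
      then sgn A (.vS1 i aa) else 0) = 0 := by
    rw [Finset.sum_congr rfl fun i _ => Finset.sum_congr rfl fun aa _ =>
      show (if (reductionGraph n m p q p' q' ep1 ep2).Adj (RVert.vK2 k a) (.vS1 i aa)
          then sgn A (.vS1 i aa) else 0) = 0 from by
        simp [reductionGraph, radj]]
    simp
  have c_vS2 : (∑ i : Fin n, ∑ aa : Fin p,
      if (reductionGraph n m p q p' q' ep1 ep2).Adj (RVert.vK2 k a) (.vS2 i aa)
      then sgn A (.vS2 i aa) else 0) = aS2 A k := by
    rw [Finset.sum_congr rfl fun i _ => Finset.sum_congr rfl fun aa _ =>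
      show (if (reductionGraph n m p q p' q' ep1 ep2).Adj (RVert.vK2 k a) (.vS2 i aa)
          then sgn A (.vS2 i aa) else 0)
        = if k = i then sgn A (.vS2 i aa) else 0 from by
        rcases eq_or_ne k i with h1 | h1
        · subst h1; simp [reductionGraph, radj]
        · have h1' : ¬ i = k := fun hh => h1 hh.symm
          simp [reductionGraph, radj, h1, h1']]
    rw [Finset.sum_congr rfl fun i _ =>
      show (∑ aa : Fin p, if k = i then sgn A (.vS2 i aa) else 0)
        = if k = i then (∑ aa : Fin p, sgn A (.vS2 i aa)) else 0 from by
        split <;> simp]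
    rw [Finset.sum_ite_eq Finset.univ k]
    simp [aS2]
  have c_eK1 : (∑ l : Fin m, ∑ c : Fin q',
      if (reductionGraph n m p q p' q' ep1 ep2).Adj (RVert.vK2 k a) (.eK1 l c)
      then sgn A (.eK1 l c) else 0) = 0 := by
    rw [Finset.sum_congr rfl fun l _ => Finset.sum_congr rfl fun c _ =>
      show (if (reductionGraph n m p q p' q' ep1 ep2).Adj (RVert.vK2 k a) (.eK1 l c)
          then sgn A (.eK1 l c) else 0) = 0 from by
        simp [reductionGraph, radj]]
    simp
  have c_eK2 : (∑ l : Fin m, ∑ c : Fin q',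
      if (reductionGraph n m p q p' q' ep1 ep2).Adj (RVert.vK2 k a) (.eK2 l c)
      then sgn A (.eK2 l c) else 0) = 0 := by
    rw [Finset.sum_congr rfl fun l _ => Finset.sum_congr rfl fun c _ =>
      show (if (reductionGraph n m p q p' q' ep1 ep2).Adj (RVert.vK2 k a) (.eK2 l c)
          then sgn A (.eK2 l c) else 0) = 0 from by
        simp [reductionGraph, radj]]
    simp
  have c_eS1 : (∑ l : Fin m, ∑ c : Fin p',
      if (reductionGraph n m p q p' q' ep1 ep2).Adj (RVert.vK2 k a) (.eS1 l c)
      then sgn A (.eS1 l c) else 0) = 0 := by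
    rw [Finset.sum_congr rfl fun l _ => Finset.sum_congr rfl fun c _ =>
      show (if (reductionGraph n m p q p' q' ep1 ep2).Adj (RVert.vK2 k a) (.eS1 l c)
          then sgn A (.eS1 l c) else 0) = 0 from by
        simp [reductionGraph, radj]]
    simp
  have c_eS2 : (∑ l : Fin m, ∑ c : Fin p',
      if (reductionGraph n m p q p' q' ep1 ep2).Adj (RVert.vK2 k a) (.eS2 l c)
      then sgn A (.eS2 l c) else 0) = 0 := by
    rw [Finset.sum_congr rfl fun l _ => Finset.sum_congr rfl fun c _ =>
      show (if (reductionGraph n m p q p' q' ep1 ep2).Adj (RVert.vK2 k a) (.eS2 l c)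
          then sgn A (.eS2 l c) else 0) = 0 from by
        simp [reductionGraph, radj]]
    simp
  have c_link : (∑ lr0 : Bool, ∑ s0 : Bool, ∑ j0 : Fin m,
      if (reductionGraph n m p q p' q' ep1 ep2).Adj (RVert.vK2 k a) (.link lr0 s0 j0)
      then sgn A (.link lr0 s0 j0) else 0) = tH ep1 ep2 A k + eH ep1 ep2 A k := by
    unfold tH eH
    rw [Finset.sum_congr rfl fun lr0 _ => Finset.sum_congr rfl fun s0 _ =>
      Finset.sum_congr rfl fun j0 _ =>
      show (if (reductionGraph n m p q p' q' ep1 ep2).Adj (RVert.vK2 k a) (.link lr0 s0 j0) then sgn A (.link lr0 s0 j0) else 0)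
        = (if linkIdx ep1 ep2 lr0 j0 < k then sgn A (.link lr0 s0 j0) else 0)
          + (if linkIdx ep1 ep2 lr0 j0 = k then sgn A (.link lr0 s0 j0) else 0) from by
      rcases lt_trichotomy (linkIdx ep1 ep2 lr0 j0) k with h | h | h
      · simp [reductionGraph, radj, h, le_of_lt h, ne_of_lt h]
      · simp [reductionGraph, radj, h, le_of_eq h, lt_irrefl]
      · simp [reductionGraph, radj, not_le_of_gt h, not_lt_of_gt h, ne_of_gt h]]
    simp only [Finset.sum_add_distrib]
  rw [c_vK1, c_vK2, c_vS1, c_vS2, c_eK1, c_eK2, c_eS1, c_eS2, c_link]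
  ring

lemma NB_vS1 (k : Fin n) (a : Fin p) :
    NB ep1 ep2 A (.vS1 k a) = aK1 A k + tH ep1 ep2 A k := by
  unfold NB
  rw [sum_rv]
  have c_vK1 : (∑ i : Fin n, ∑ aa : Fin q,
      if (reductionGraph n m p q p' q' ep1 ep2).Adj (RVert.vS1 k a) (.vK1 i aa)
      then sgn A (.vK1 i aa) else 0) = aK1 A k := by
    rw [Finset.sum_congr rfl fun i _ => Finset.sum_congr rfl fun aa _ =>
      show (if (reductionGraph n m p q p' q' ep1 ep2).Adj (RVert.vS1 k a) (.vK1 i aa)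
          then sgn A (.vK1 i aa) else 0)
        = if i = k then sgn A (.vK1 i aa) else 0 from by
        rcases eq_or_ne k i with h1 | h1
        · subst h1; simp [reductionGraph, radj]
        · have h1' : ¬ i = k := fun hh => h1 hh.symm
          simp [reductionGraph, radj, h1, h1']]
    rw [Finset.sum_congr rfl fun i _ =>
      show (∑ aa : Fin q, if i = k then sgn A (.vK1 i aa) else 0)
        = if i = k then (∑ aa : Fin q, sgn A (.vK1 i aa)) else 0 from by
        split <;> simp]
    rw [Finset.sum_ite_eq' Finset.univ k]
    simp [aK1]
  have c_vK2 : (∑ i : Fin n, ∑ aa : Fin q,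
      if (reductionGraph n m p q p' q' ep1 ep2).Adj (RVert.vS1 k a) (.vK2 i aa)
      then sgn A (.vK2 i aa) else 0) = 0 := by
    rw [Finset.sum_congr rfl fun i _ => Finset.sum_congr rfl fun aa _ =>
      show (if (reductionGraph n m p q p' q' ep1 ep2).Adj (RVert.vS1 k a) (.vK2 i aa)
          then sgn A (.vK2 i aa) else 0) = 0 from by
        simp [reductionGraph, radj]]
    simp
  have c_vS1 : (∑ i : Fin n, ∑ aa : Fin p,
      if (reductionGraph n m p q p' q' ep1 ep2).Adj (RVert.vS1 k a) (.vS1 i aa)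
      then sgn A (.vS1 i aa) else 0) = 0 := by
    rw [Finset.sum_congr rfl fun i _ => Finset.sum_congr rfl fun aa _ =>
      show (if (reductionGraph n m p q p' q' ep1 ep2).Adj (RVert.vS1 k a) (.vS1 i aa)
          then sgn A (.vS1 i aa) else 0) = 0 from by
        simp [reductionGraph, radj]]
    simp
  have c_vS2 : (∑ i : Fin n, ∑ aa : Fin p,
      if (reductionGraph n m p q p' q' ep1 ep2).Adj (RVert.vS1 k a) (.vS2 i aa)
      then sgn A (.vS2 i aa) else 0) = 0 := by
    rw [Finset.sum_congr rfl fun i _ => Finset.sum_congr rfl fun aa _ =>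
      show (if (reductionGraph n m p q p' q' ep1 ep2).Adj (RVert.vS1 k a) (.vS2 i aa)
          then sgn A (.vS2 i aa) else 0) = 0 from by
        simp [reductionGraph, radj]]
    simp
  have c_eK1 : (∑ l : Fin m, ∑ c : Fin q',
      if (reductionGraph n m p q p' q' ep1 ep2).Adj (RVert.vS1 k a) (.eK1 l c)
      then sgn A (.eK1 l c) else 0) = 0 := by
    rw [Finset.sum_congr rfl fun l _ => Finset.sum_congr rfl fun c _ =>
      show (if (reductionGraph n m p q p' q' ep1 ep2).Adj (RVert.vS1 k a) (.eK1 l c)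
          then sgn A (.eK1 l c) else 0) = 0 from by
        simp [reductionGraph, radj]]
    simp
  have c_eK2 : (∑ l : Fin m, ∑ c : Fin q',
      if (reductionGraph n m p q p' q' ep1 ep2).Adj (RVert.vS1 k a) (.eK2 l c)
      then sgn A (.eK2 l c) else 0) = 0 := by
    rw [Finset.sum_congr rfl fun l _ => Finset.sum_congr rfl fun c _ =>
      show (if (reductionGraph n m p q p' q' ep1 ep2).Adj (RVert.vS1 k a) (.eK2 l c)
          then sgn A (.eK2 l c) else 0) = 0 from by
        simp [reductionGraph, radj]]
    simp
  have c_eS1 : (∑ l : Fin m, ∑ c : Fin p',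
      if (reductionGraph n m p q p' q' ep1 ep2).Adj (RVert.vS1 k a) (.eS1 l c)
      then sgn A (.eS1 l c) else 0) = 0 := by
    rw [Finset.sum_congr rfl fun l _ => Finset.sum_congr rfl fun c _ =>
      show (if (reductionGraph n m p q p' q' ep1 ep2).Adj (RVert.vS1 k a) (.eS1 l c)
          then sgn A (.eS1 l c) else 0) = 0 from by
        simp [reductionGraph, radj]]
    simp
  have c_eS2 : (∑ l : Fin m, ∑ c : Fin p',
      if (reductionGraph n m p q p' q' ep1 ep2).Adj (RVert.vS1 k a) (.eS2 l c)
      then sgn A (.eS2 l c) else 0) = 0 := by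
    rw [Finset.sum_congr rfl fun l _ => Finset.sum_congr rfl fun c _ =>
      show (if (reductionGraph n m p q p' q' ep1 ep2).Adj (RVert.vS1 k a) (.eS2 l c)
          then sgn A (.eS2 l c) else 0) = 0 from by
        simp [reductionGraph, radj]]
    simp
  have c_link : (∑ lr0 : Bool, ∑ s0 : Bool, ∑ j0 : Fin m,
      if (reductionGraph n m p q p' q' ep1 ep2).Adj (RVert.vS1 k a) (.link lr0 s0 j0)
      then sgn A (.link lr0 s0 j0) else 0) = tH ep1 ep2 A k := by
    unfold tH
    refine Finset.sum_congr rfl fun lr0 _ => Finset.sum_congr rfl fun s0 _ =>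
      Finset.sum_congr rfl fun j0 _ => ?_
    by_cases h1 : linkIdx ep1 ep2 lr0 j0 < k <;> simp [reductionGraph, radj, h1]
  rw [c_vK1, c_vK2, c_vS1, c_vS2, c_eK1, c_eK2, c_eS1, c_eS2, c_link]
  ring

lemma NB_vS2 (k : Fin n) (a : Fin p) :
    NB ep1 ep2 A (.vS2 k a) = aK2 A k + tH ep1 ep2 A k := by
  unfold NB
  rw [sum_rv]
  have c_vK1 : (∑ i : Fin n, ∑ aa : Fin q,
      if (reductionGraph n m p q p' q' ep1 ep2).Adj (RVert.vS2 k a) (.vK1 i aa)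
      then sgn A (.vK1 i aa) else 0) = 0 := by
    rw [Finset.sum_congr rfl fun i _ => Finset.sum_congr rfl fun aa _ =>
      show (if (reductionGraph n m p q p' q' ep1 ep2).Adj (RVert.vS2 k a) (.vK1 i aa)
          then sgn A (.vK1 i aa) else 0) = 0 from by
        simp [reductionGraph, radj]]
    simp
  have c_vK2 : (∑ i : Fin n, ∑ aa : Fin q,
      if (reductionGraph n m p q p' q' ep1 ep2).Adj (RVert.vS2 k a) (.vK2 i aa)
      then sgn A (.vK2 i aa) else 0) = aK2 A k := by
    rw [Finset.sum_congr rfl fun i _ => Finset.sum_congr rfl fun aa _ =>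
      show (if (reductionGraph n m p q p' q' ep1 ep2).Adj (RVert.vS2 k a) (.vK2 i aa)
          then sgn A (.vK2 i aa) else 0)
        = if i = k then sgn A (.vK2 i aa) else 0 from by
        rcases eq_or_ne k i with h1 | h1
        · subst h1; simp [reductionGraph, radj]
        · have h1' : ¬ i = k := fun hh => h1 hh.symm
          simp [reductionGraph, radj, h1, h1']]
    rw [Finset.sum_congr rfl fun i _ =>
      show (∑ aa : Fin q, if i = k then sgn A (.vK2 i aa) else 0)
        = if i = k then (∑ aa : Fin q, sgn A (.vK2 i aa)) else 0 from by
        split <;> simp]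
    rw [Finset.sum_ite_eq' Finset.univ k]
    simp [aK2]
  have c_vS1 : (∑ i : Fin n, ∑ aa : Fin p,
      if (reductionGraph n m p q p' q' ep1 ep2).Adj (RVert.vS2 k a) (.vS1 i aa)
      then sgn A (.vS1 i aa) else 0) = 0 := by
    rw [Finset.sum_congr rfl fun i _ => Finset.sum_congr rfl fun aa _ =>
      show (if (reductionGraph n m p q p' q' ep1 ep2).Adj (RVert.vS2 k a) (.vS1 i aa)
          then sgn A (.vS1 i aa) else 0) = 0 from by
        simp [reductionGraph, radj]]
    simp
  have c_vS2 : (∑ i : Fin n, ∑ aa : Fin p,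
      if (reductionGraph n m p q p' q' ep1 ep2).Adj (RVert.vS2 k a) (.vS2 i aa)
      then sgn A (.vS2 i aa) else 0) = 0 := by
    rw [Finset.sum_congr rfl fun i _ => Finset.sum_congr rfl fun aa _ =>
      show (if (reductionGraph n m p q p' q' ep1 ep2).Adj (RVert.vS2 k a) (.vS2 i aa)
          then sgn A (.vS2 i aa) else 0) = 0 from by
        simp [reductionGraph, radj]]
    simp
  have c_eK1 : (∑ l : Fin m, ∑ c : Fin q',
      if (reductionGraph n m p q p' q' ep1 ep2).Adj (RVert.vS2 k a) (.eK1 l c)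
      then sgn A (.eK1 l c) else 0) = 0 := by
    rw [Finset.sum_congr rfl fun l _ => Finset.sum_congr rfl fun c _ =>
      show (if (reductionGraph n m p q p' q' ep1 ep2).Adj (RVert.vS2 k a) (.eK1 l c)
          then sgn A (.eK1 l c) else 0) = 0 from by
        simp [reductionGraph, radj]]
    simp
  have c_eK2 : (∑ l : Fin m, ∑ c : Fin q',
      if (reductionGraph n m p q p' q' ep1 ep2).Adj (RVert.vS2 k a) (.eK2 l c)
      then sgn A (.eK2 l c) else 0) = 0 := by
    rw [Finset.sum_congr rfl fun l _ => Finset.sum_congr rfl fun c _ =>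
      show (if (reductionGraph n m p q p' q' ep1 ep2).Adj (RVert.vS2 k a) (.eK2 l c)
          then sgn A (.eK2 l c) else 0) = 0 from by
        simp [reductionGraph, radj]]
    simp
  have c_eS1 : (∑ l : Fin m, ∑ c : Fin p',
      if (reductionGraph n m p q p' q' ep1 ep2).Adj (RVert.vS2 k a) (.eS1 l c)
      then sgn A (.eS1 l c) else 0) = 0 := by
    rw [Finset.sum_congr rfl fun l _ => Finset.sum_congr rfl fun c _ =>
      show (if (reductionGraph n m p q p' q' ep1 ep2).Adj (RVert.vS2 k a) (.eS1 l c)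
          then sgn A (.eS1 l c) else 0) = 0 from by
        simp [reductionGraph, radj]]
    simp
  have c_eS2 : (∑ l : Fin m, ∑ c : Fin p',
      if (reductionGraph n m p q p' q' ep1 ep2).Adj (RVert.vS2 k a) (.eS2 l c)
      then sgn A (.eS2 l c) else 0) = 0 := by
    rw [Finset.sum_congr rfl fun l _ => Finset.sum_congr rfl fun c _ =>
      show (if (reductionGraph n m p q p' q' ep1 ep2).Adj (RVert.vS2 k a) (.eS2 l c)
          then sgn A (.eS2 l c) else 0) = 0 from by
        simp [reductionGraph, radj]]
    simp
  have c_link : (∑ lr0 : Bool, ∑ s0 : Bool, ∑ j0 : Fin m,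
      if (reductionGraph n m p q p' q' ep1 ep2).Adj (RVert.vS2 k a) (.link lr0 s0 j0)
      then sgn A (.link lr0 s0 j0) else 0) = tH ep1 ep2 A k := by
    unfold tH
    refine Finset.sum_congr rfl fun lr0 _ => Finset.sum_congr rfl fun s0 _ =>
      Finset.sum_congr rfl fun j0 _ => ?_
    by_cases h1 : linkIdx ep1 ep2 lr0 j0 < k <;> simp [reductionGraph, radj, h1]
  rw [c_vK1, c_vK2, c_vS1, c_vS2, c_eK1, c_eK2, c_eS1, c_eS2, c_link]
  ring

lemma NB_eK1 (l : Fin m) (c : Fin q') :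
    NB ep1 ep2 A (.eK1 l c) =
      (bK1 A l - sgn A (.eK1 l c)) + bK2 A l + bS1 A l + tE A l + xE A l := by
  unfold NB
  rw [sum_rv]
  have c_vK1 : (∑ i : Fin n, ∑ aa : Fin q,
      if (reductionGraph n m p q p' q' ep1 ep2).Adj (RVert.eK1 l c) (.vK1 i aa)
      then sgn A (.vK1 i aa) else 0) = 0 := by
    rw [Finset.sum_congr rfl fun i _ => Finset.sum_congr rfl fun aa _ =>
      show (if (reductionGraph n m p q p' q' ep1 ep2).Adj (RVert.eK1 l c) (.vK1 i aa)
          then sgn A (.vK1 i aa) else 0) = 0 from by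
        simp [reductionGraph, radj]]
    simp
  have c_vK2 : (∑ i : Fin n, ∑ aa : Fin q,
      if (reductionGraph n m p q p' q' ep1 ep2).Adj (RVert.eK1 l c) (.vK2 i aa)
      then sgn A (.vK2 i aa) else 0) = 0 := by
    rw [Finset.sum_congr rfl fun i _ => Finset.sum_congr rfl fun aa _ =>
      show (if (reductionGraph n m p q p' q' ep1 ep2).Adj (RVert.eK1 l c) (.vK2 i aa)
          then sgn A (.vK2 i aa) else 0) = 0 from by
        simp [reductionGraph, radj]]
    simp
  have c_vS1 : (∑ i : Fin n, ∑ aa : Fin p,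
      if (reductionGraph n m p q p' q' ep1 ep2).Adj (RVert.eK1 l c) (.vS1 i aa)
      then sgn A (.vS1 i aa) else 0) = 0 := by
    rw [Finset.sum_congr rfl fun i _ => Finset.sum_congr rfl fun aa _ =>
      show (if (reductionGraph n m p q p' q' ep1 ep2).Adj (RVert.eK1 l c) (.vS1 i aa)
          then sgn A (.vS1 i aa) else 0) = 0 from by
        simp [reductionGraph, radj]]
    simp
  have c_vS2 : (∑ i : Fin n, ∑ aa : Fin p,
      if (reductionGraph n m p q p' q' ep1 ep2).Adj (RVert.eK1 l c) (.vS2 i aa)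
      then sgn A (.vS2 i aa) else 0) = 0 := by
    rw [Finset.sum_congr rfl fun i _ => Finset.sum_congr rfl fun aa _ =>
      show (if (reductionGraph n m p q p' q' ep1 ep2).Adj (RVert.eK1 l c) (.vS2 i aa)
          then sgn A (.vS2 i aa) else 0) = 0 from by
        simp [reductionGraph, radj]]
    simp
  have c_eK1 : (∑ l2 : Fin m, ∑ c2 : Fin q',
      if (reductionGraph n m p q p' q' ep1 ep2).Adj (RVert.eK1 l c) (.eK1 l2 c2)
      then sgn A (.eK1 l2 c2) else 0) = bK1 A l - sgn A (RVert.eK1 l c) := by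
    rw [Finset.sum_congr rfl fun l2 _ => Finset.sum_congr rfl fun c2 _ =>
      show (if (reductionGraph n m p q p' q' ep1 ep2).Adj (RVert.eK1 l c) (.eK1 l2 c2)
          then sgn A (.eK1 l2 c2) else 0)
        = if l = l2 then (if c = c2 then 0 else sgn A (.eK1 l2 c2)) else 0 from by
        rcases eq_or_ne l l2 with h1 | h1
        · subst h1; by_cases h2 : c = c2 <;> simp [reductionGraph, radj, h2]
        · have h1' : ¬ l2 = l := fun hh => h1 hh.symm
          simp [reductionGraph, radj, h1, h1']]
    rw [Finset.sum_congr rfl fun l2 _ =>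
      show (∑ c2 : Fin q', if l = l2 then (if c = c2 then 0 else sgn A (.eK1 l2 c2)) else 0)
        = if l = l2 then (∑ c2 : Fin q', if c = c2 then 0 else sgn A (.eK1 l2 c2)) else 0 from by
        split <;> simp]
    rw [Finset.sum_ite_eq Finset.univ l]
    simp [sum_erase_one (fun c2 => sgn A (.eK1 l c2)) c, bK1]
  have c_eK2 : (∑ l2 : Fin m, ∑ c2 : Fin q',
      if (reductionGraph n m p q p' q' ep1 ep2).Adj (RVert.eK1 l c) (.eK2 l2 c2)
      then sgn A (.eK2 l2 c2) else 0) = bK2 A l := by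
    rw [Finset.sum_congr rfl fun l2 _ => Finset.sum_congr rfl fun c2 _ =>
      show (if (reductionGraph n m p q p' q' ep1 ep2).Adj (RVert.eK1 l c) (.eK2 l2 c2)
          then sgn A (.eK2 l2 c2) else 0)
        = if l = l2 then sgn A (.eK2 l2 c2) else 0 from by
        rcases eq_or_ne l l2 with h1 | h1
        · subst h1; simp [reductionGraph, radj]
        · have h1' : ¬ l2 = l := fun hh => h1 hh.symm
          simp [reductionGraph, radj, h1, h1']]
    rw [Finset.sum_congr rfl fun l2 _ =>
      show (∑ c2 : Fin q', if l = l2 then sgn A (.eK2 l2 c2) else 0)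
        = if l = l2 then (∑ c2 : Fin q', sgn A (.eK2 l2 c2)) else 0 from by
        split <;> simp]
    rw [Finset.sum_ite_eq Finset.univ l]
    simp [bK2]
  have c_eS1 : (∑ l2 : Fin m, ∑ c2 : Fin p',
      if (reductionGraph n m p q p' q' ep1 ep2).Adj (RVert.eK1 l c) (.eS1 l2 c2)
      then sgn A (.eS1 l2 c2) else 0) = bS1 A l := by
    rw [Finset.sum_congr rfl fun l2 _ => Finset.sum_congr rfl fun c2 _ =>
      show (if (reductionGraph n m p q p' q' ep1 ep2).Adj (RVert.eK1 l c) (.eS1 l2 c2)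
          then sgn A (.eS1 l2 c2) else 0)
        = if l = l2 then sgn A (.eS1 l2 c2) else 0 from by
        rcases eq_or_ne l l2 with h1 | h1
        · subst h1; simp [reductionGraph, radj]
        · have h1' : ¬ l2 = l := fun hh => h1 hh.symm
          simp [reductionGraph, radj, h1, h1']]
    rw [Finset.sum_congr rfl fun l2 _ =>
      show (∑ c2 : Fin p', if l = l2 then sgn A (.eS1 l2 c2) else 0)
        = if l = l2 then (∑ c2 : Fin p', sgn A (.eS1 l2 c2)) else 0 from by
        split <;> simp]
    rw [Finset.sum_ite_eq Finset.univ l]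
    simp [bS1]
  have c_eS2 : (∑ l2 : Fin m, ∑ c2 : Fin p',
      if (reductionGraph n m p q p' q' ep1 ep2).Adj (RVert.eK1 l c) (.eS2 l2 c2)
      then sgn A (.eS2 l2 c2) else 0) = 0 := by
    rw [Finset.sum_congr rfl fun l2 _ => Finset.sum_congr rfl fun c2 _ =>
      show (if (reductionGraph n m p q p' q' ep1 ep2).Adj (RVert.eK1 l c) (.eS2 l2 c2)
          then sgn A (.eS2 l2 c2) else 0) = 0 from by
        simp [reductionGraph, radj]]
    simp
  have c_link : (∑ lr0 : Bool, ∑ s0 : Bool, ∑ j0 : Fin m,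
      if (reductionGraph n m p q p' q' ep1 ep2).Adj (RVert.eK1 l c) (.link lr0 s0 j0)
      then sgn A (.link lr0 s0 j0) else 0) = tE A l + xE A l := by
    unfold tE xE
    rw [Finset.sum_congr rfl fun lr0 _ => Finset.sum_congr rfl fun s0 _ =>
      Finset.sum_congr rfl fun j0 _ =>
      show (if (reductionGraph n m p q p' q' ep1 ep2).Adj (RVert.eK1 l c) (.link lr0 s0 j0) then sgn A (.link lr0 s0 j0) else 0)
        = (if l < j0 then sgn A (.link lr0 s0 j0) else 0)
          + (if j0 = l then sgn A (.link lr0 s0 j0) else 0) from by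
      rcases lt_trichotomy l j0 with h | h | h
      · simp [reductionGraph, radj, h, le_of_lt h, (ne_of_lt h).symm]
      · subst h; simp [reductionGraph, radj, lt_irrefl]
      · simp [reductionGraph, radj, not_le_of_gt h, not_lt_of_gt h, ne_of_lt h]]
    simp only [Finset.sum_add_distrib]
    congr 1
    refine Finset.sum_congr rfl fun lr0 _ => Finset.sum_congr rfl fun s0 _ => ?_
    rw [Finset.sum_ite_eq' Finset.univ l]
    simp
  rw [c_vK1, c_vK2, c_vS1, c_vS2, c_eK1, c_eK2, c_eS1, c_eS2, c_link]
  ring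

lemma NB_eK2 (l : Fin m) (c : Fin q') :
    NB ep1 ep2 A (.eK2 l c) =
      bK1 A l + (bK2 A l - sgn A (.eK2 l c)) + bS2 A l + tE A l := by
  unfold NB
  rw [sum_rv]
  have c_vK1 : (∑ i : Fin n, ∑ aa : Fin q,
      if (reductionGraph n m p q p' q' ep1 ep2).Adj (RVert.eK2 l c) (.vK1 i aa)
      then sgn A (.vK1 i aa) else 0) = 0 := by
    rw [Finset.sum_congr rfl fun i _ => Finset.sum_congr rfl fun aa _ =>
      show (if (reductionGraph n m p q p' q' ep1 ep2).Adj (RVert.eK2 l c) (.vK1 i aa)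
          then sgn A (.vK1 i aa) else 0) = 0 from by
        simp [reductionGraph, radj]]
    simp
  have c_vK2 : (∑ i : Fin n, ∑ aa : Fin q,
      if (reductionGraph n m p q p' q' ep1 ep2).Adj (RVert.eK2 l c) (.vK2 i aa)
      then sgn A (.vK2 i aa) else 0) = 0 := by
    rw [Finset.sum_congr rfl fun i _ => Finset.sum_congr rfl fun aa _ =>
      show (if (reductionGraph n m p q p' q' ep1 ep2).Adj (RVert.eK2 l c) (.vK2 i aa)
          then sgn A (.vK2 i aa) else 0) = 0 from by
        simp [reductionGraph, radj]]
    simp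
  have c_vS1 : (∑ i : Fin n, ∑ aa : Fin p,
      if (reductionGraph n m p q p' q' ep1 ep2).Adj (RVert.eK2 l c) (.vS1 i aa)
      then sgn A (.vS1 i aa) else 0) = 0 := by
    rw [Finset.sum_congr rfl fun i _ => Finset.sum_congr rfl fun aa _ =>
      show (if (reductionGraph n m p q p' q' ep1 ep2).Adj (RVert.eK2 l c) (.vS1 i aa)
          then sgn A (.vS1 i aa) else 0) = 0 from by
        simp [reductionGraph, radj]]
    simp
  have c_vS2 : (∑ i : Fin n, ∑ aa : Fin p,
      if (reductionGraph n m p q p' q' ep1 ep2).Adj (RVert.eK2 l c) (.vS2 i aa)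
      then sgn A (.vS2 i aa) else 0) = 0 := by
    rw [Finset.sum_congr rfl fun i _ => Finset.sum_congr rfl fun aa _ =>
      show (if (reductionGraph n m p q p' q' ep1 ep2).Adj (RVert.eK2 l c) (.vS2 i aa)
          then sgn A (.vS2 i aa) else 0) = 0 from by
        simp [reductionGraph, radj]]
    simp
  have c_eK1 : (∑ l2 : Fin m, ∑ c2 : Fin q',
      if (reductionGraph n m p q p' q' ep1 ep2).Adj (RVert.eK2 l c) (.eK1 l2 c2)
      then sgn A (.eK1 l2 c2) else 0) = bK1 A l := by
    rw [Finset.sum_congr rfl fun l2 _ => Finset.sum_congr rfl fun c2 _ =>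
      show (if (reductionGraph n m p q p' q' ep1 ep2).Adj (RVert.eK2 l c) (.eK1 l2 c2)
          then sgn A (.eK1 l2 c2) else 0)
        = if l2 = l then sgn A (.eK1 l2 c2) else 0 from by
        rcases eq_or_ne l l2 with h1 | h1
        · subst h1; simp [reductionGraph, radj]
        · have h1' : ¬ l2 = l := fun hh => h1 hh.symm
          simp [reductionGraph, radj, h1, h1']]
    rw [Finset.sum_congr rfl fun l2 _ =>
      show (∑ c2 : Fin q', if l2 = l then sgn A (.eK1 l2 c2) else 0)
        = if l2 = l then (∑ c2 : Fin q', sgn A (.eK1 l2 c2)) else 0 from by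
        split <;> simp]
    rw [Finset.sum_ite_eq' Finset.univ l]
    simp [bK1]
  have c_eK2 : (∑ l2 : Fin m, ∑ c2 : Fin q',
      if (reductionGraph n m p q p' q' ep1 ep2).Adj (RVert.eK2 l c) (.eK2 l2 c2)
      then sgn A (.eK2 l2 c2) else 0) = bK2 A l - sgn A (RVert.eK2 l c) := by
    rw [Finset.sum_congr rfl fun l2 _ => Finset.sum_congr rfl fun c2 _ =>
      show (if (reductionGraph n m p q p' q' ep1 ep2).Adj (RVert.eK2 l c) (.eK2 l2 c2)
          then sgn A (.eK2 l2 c2) else 0)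
        = if l = l2 then (if c = c2 then 0 else sgn A (.eK2 l2 c2)) else 0 from by
        rcases eq_or_ne l l2 with h1 | h1
        · subst h1; by_cases h2 : c = c2 <;> simp [reductionGraph, radj, h2]
        · have h1' : ¬ l2 = l := fun hh => h1 hh.symm
          simp [reductionGraph, radj, h1, h1']]
    rw [Finset.sum_congr rfl fun l2 _ =>
      show (∑ c2 : Fin q', if l = l2 then (if c = c2 then 0 else sgn A (.eK2 l2 c2)) else 0)
        = if l = l2 then (∑ c2 : Fin q', if c = c2 then 0 else sgn A (.eK2 l2 c2)) else 0 from by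
        split <;> simp]
    rw [Finset.sum_ite_eq Finset.univ l]
    simp [sum_erase_one (fun c2 => sgn A (.eK2 l c2)) c, bK2]
  have c_eS1 : (∑ l2 : Fin m, ∑ c2 : Fin p',
      if (reductionGraph n m p q p' q' ep1 ep2).Adj (RVert.eK2 l c) (.eS1 l2 c2)
      then sgn A (.eS1 l2 c2) else 0) = 0 := by
    rw [Finset.sum_congr rfl fun l2 _ => Finset.sum_congr rfl fun c2 _ =>
      show (if (reductionGraph n m p q p' q' ep1 ep2).Adj (RVert.eK2 l c) (.eS1 l2 c2)
          then sgn A (.eS1 l2 c2) else 0) = 0 from by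
        simp [reductionGraph, radj]]
    simp
  have c_eS2 : (∑ l2 : Fin m, ∑ c2 : Fin p',
      if (reductionGraph n m p q p' q' ep1 ep2).Adj (RVert.eK2 l c) (.eS2 l2 c2)
      then sgn A (.eS2 l2 c2) else 0) = bS2 A l := by
    rw [Finset.sum_congr rfl fun l2 _ => Finset.sum_congr rfl fun c2 _ =>
      show (if (reductionGraph n m p q p' q' ep1 ep2).Adj (RVert.eK2 l c) (.eS2 l2 c2)
          then sgn A (.eS2 l2 c2) else 0)
        = if l = l2 then sgn A (.eS2 l2 c2) else 0 from by
        rcases eq_or_ne l l2 with h1 | h1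
        · subst h1; simp [reductionGraph, radj]
        · have h1' : ¬ l2 = l := fun hh => h1 hh.symm
          simp [reductionGraph, radj, h1, h1']]
    rw [Finset.sum_congr rfl fun l2 _ =>
      show (∑ c2 : Fin p', if l = l2 then sgn A (.eS2 l2 c2) else 0)
        = if l = l2 then (∑ c2 : Fin p', sgn A (.eS2 l2 c2)) else 0 from by
        split <;> simp]
    rw [Finset.sum_ite_eq Finset.univ l]
    simp [bS2]
  have c_link : (∑ lr0 : Bool, ∑ s0 : Bool, ∑ j0 : Fin m,
      if (reductionGraph n m p q p' q' ep1 ep2).Adj (RVert.eK2 l c) (.link lr0 s0 j0)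
      then sgn A (.link lr0 s0 j0) else 0) = tE A l := by
    unfold tE
    refine Finset.sum_congr rfl fun lr0 _ => Finset.sum_congr rfl fun s0 _ =>
      Finset.sum_congr rfl fun j0 _ => ?_
    by_cases h1 : l < j0 <;> simp [reductionGraph, radj, h1]
  rw [c_vK1, c_vK2, c_vS1, c_vS2, c_eK1, c_eK2, c_eS1, c_eS2, c_link]
  ring

lemma NB_eS1 (l : Fin m) (c : Fin p') :
    NB ep1 ep2 A (.eS1 l c) = bK1 A l + tE A l + yE A l := by
  unfold NB
  rw [sum_rv]
  have c_vK1 : (∑ i : Fin n, ∑ aa : Fin q,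
      if (reductionGraph n m p q p' q' ep1 ep2).Adj (RVert.eS1 l c) (.vK1 i aa)
      then sgn A (.vK1 i aa) else 0) = 0 := by
    rw [Finset.sum_congr rfl fun i _ => Finset.sum_congr rfl fun aa _ =>
      show (if (reductionGraph n m p q p' q' ep1 ep2).Adj (RVert.eS1 l c) (.vK1 i aa)
          then sgn A (.vK1 i aa) else 0) = 0 from by
        simp [reductionGraph, radj]]
    simp
  have c_vK2 : (∑ i : Fin n, ∑ aa : Fin q,
      if (reductionGraph n m p q p' q' ep1 ep2).Adj (RVert.eS1 l c) (.vK2 i aa)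
      then sgn A (.vK2 i aa) else 0) = 0 := by
    rw [Finset.sum_congr rfl fun i _ => Finset.sum_congr rfl fun aa _ =>
      show (if (reductionGraph n m p q p' q' ep1 ep2).Adj (RVert.eS1 l c) (.vK2 i aa)
          then sgn A (.vK2 i aa) else 0) = 0 from by
        simp [reductionGraph, radj]]
    simp
  have c_vS1 : (∑ i : Fin n, ∑ aa : Fin p,
      if (reductionGraph n m p q p' q' ep1 ep2).Adj (RVert.eS1 l c) (.vS1 i aa)
      then sgn A (.vS1 i aa) else 0) = 0 := by
    rw [Finset.sum_congr rfl fun i _ => Finset.sum_congr rfl fun aa _ =>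
      show (if (reductionGraph n m p q p' q' ep1 ep2).Adj (RVert.eS1 l c) (.vS1 i aa)
          then sgn A (.vS1 i aa) else 0) = 0 from by
        simp [reductionGraph, radj]]
    simp
  have c_vS2 : (∑ i : Fin n, ∑ aa : Fin p,
      if (reductionGraph n m p q p' q' ep1 ep2).Adj (RVert.eS1 l c) (.vS2 i aa)
      then sgn A (.vS2 i aa) else 0) = 0 := by
    rw [Finset.sum_congr rfl fun i _ => Finset.sum_congr rfl fun aa _ =>
      show (if (reductionGraph n m p q p' q' ep1 ep2).Adj (RVert.eS1 l c) (.vS2 i aa)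
          then sgn A (.vS2 i aa) else 0) = 0 from by
        simp [reductionGraph, radj]]
    simp
  have c_eK1 : (∑ l2 : Fin m, ∑ c2 : Fin q',
      if (reductionGraph n m p q p' q' ep1 ep2).Adj (RVert.eS1 l c) (.eK1 l2 c2)
      then sgn A (.eK1 l2 c2) else 0) = bK1 A l := by
    rw [Finset.sum_congr rfl fun l2 _ => Finset.sum_congr rfl fun c2 _ =>
      show (if (reductionGraph n m p q p' q' ep1 ep2).Adj (RVert.eS1 l c) (.eK1 l2 c2)
          then sgn A (.eK1 l2 c2) else 0)
        = if l2 = l then sgn A (.eK1 l2 c2) else 0 from by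
        rcases eq_or_ne l l2 with h1 | h1
        · subst h1; simp [reductionGraph, radj]
        · have h1' : ¬ l2 = l := fun hh => h1 hh.symm
          simp [reductionGraph, radj, h1, h1']]
    rw [Finset.sum_congr rfl fun l2 _ =>
      show (∑ c2 : Fin q', if l2 = l then sgn A (.eK1 l2 c2) else 0)
        = if l2 = l then (∑ c2 : Fin q', sgn A (.eK1 l2 c2)) else 0 from by
        split <;> simp]
    rw [Finset.sum_ite_eq' Finset.univ l]
    simp [bK1]
  have c_eK2 : (∑ l2 : Fin m, ∑ c2 : Fin q',
      if (reductionGraph n m p q p' q' ep1 ep2).Adj (RVert.eS1 l c) (.eK2 l2 c2)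
      then sgn A (.eK2 l2 c2) else 0) = 0 := by
    rw [Finset.sum_congr rfl fun l2 _ => Finset.sum_congr rfl fun c2 _ =>
      show (if (reductionGraph n m p q p' q' ep1 ep2).Adj (RVert.eS1 l c) (.eK2 l2 c2)
          then sgn A (.eK2 l2 c2) else 0) = 0 from by
        simp [reductionGraph, radj]]
    simp
  have c_eS1 : (∑ l2 : Fin m, ∑ c2 : Fin p',
      if (reductionGraph n m p q p' q' ep1 ep2).Adj (RVert.eS1 l c) (.eS1 l2 c2)
      then sgn A (.eS1 l2 c2) else 0) = 0 := by
    rw [Finset.sum_congr rfl fun l2 _ => Finset.sum_congr rfl fun c2 _ =>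
      show (if (reductionGraph n m p q p' q' ep1 ep2).Adj (RVert.eS1 l c) (.eS1 l2 c2)
          then sgn A (.eS1 l2 c2) else 0) = 0 from by
        simp [reductionGraph, radj]]
    simp
  have c_eS2 : (∑ l2 : Fin m, ∑ c2 : Fin p',
      if (reductionGraph n m p q p' q' ep1 ep2).Adj (RVert.eS1 l c) (.eS2 l2 c2)
      then sgn A (.eS2 l2 c2) else 0) = 0 := by
    rw [Finset.sum_congr rfl fun l2 _ => Finset.sum_congr rfl fun c2 _ =>
      show (if (reductionGraph n m p q p' q' ep1 ep2).Adj (RVert.eS1 l c) (.eS2 l2 c2)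
          then sgn A (.eS2 l2 c2) else 0) = 0 from by
        simp [reductionGraph, radj]]
    simp
  have c_link : (∑ lr0 : Bool, ∑ s0 : Bool, ∑ j0 : Fin m,
      if (reductionGraph n m p q p' q' ep1 ep2).Adj (RVert.eS1 l c) (.link lr0 s0 j0)
      then sgn A (.link lr0 s0 j0) else 0) = tE A l + yE A l := by
    unfold tE yE
    rw [Finset.sum_congr rfl fun lr0 _ => Finset.sum_congr rfl fun s0 _ =>
      Finset.sum_congr rfl fun j0 _ =>
      show (if (reductionGraph n m p q p' q' ep1 ep2).Adj (RVert.eS1 l c) (.link lr0 s0 j0) then sgn A (.link lr0 s0 j0) else 0)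
        = (if l < j0 then sgn A (.link lr0 s0 j0) else 0)
          + (if lr0 = false then (if j0 = l then sgn A (.link lr0 s0 j0) else 0) else 0) from by
      rcases lt_trichotomy l j0 with h | h | h
      · have : ¬ j0 = l := (ne_of_lt h).symm
        by_cases hlr : lr0 = false <;>
          simp [reductionGraph, radj, h, this, hlr]
      · subst h
        by_cases hlr : lr0 = false <;>
          simp [reductionGraph, radj, lt_irrefl, hlr]
      · have h2 : ¬ l < j0 := not_lt_of_gt h
        have h3 : ¬ j0 = l := ne_of_lt h
        have h4 : ¬ l = j0 := ne_of_gt h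
        by_cases hlr : lr0 = false <;>
          simp [reductionGraph, radj, h2, h3, h4, hlr]]
    simp only [Finset.sum_add_distrib]
    congr 1
    rw [Fintype.sum_bool, Fintype.sum_bool]
    simp [Finset.sum_ite_eq' Finset.univ l]
  rw [c_vK1, c_vK2, c_vS1, c_vS2, c_eK1, c_eK2, c_eS1, c_eS2, c_link]
  ring

lemma NB_eS2 (l : Fin m) (c : Fin p') :
    NB ep1 ep2 A (.eS2 l c) = bK2 A l + tE A l := by
  unfold NB
  rw [sum_rv]
  have c_vK1 : (∑ i : Fin n, ∑ aa : Fin q,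
      if (reductionGraph n m p q p' q' ep1 ep2).Adj (RVert.eS2 l c) (.vK1 i aa)
      then sgn A (.vK1 i aa) else 0) = 0 := by
    rw [Finset.sum_congr rfl fun i _ => Finset.sum_congr rfl fun aa _ =>
      show (if (reductionGraph n m p q p' q' ep1 ep2).Adj (RVert.eS2 l c) (.vK1 i aa)
          then sgn A (.vK1 i aa) else 0) = 0 from by
        simp [reductionGraph, radj]]
    simp
  have c_vK2 : (∑ i : Fin n, ∑ aa : Fin q,
      if (reductionGraph n m p q p' q' ep1 ep2).Adj (RVert.eS2 l c) (.vK2 i aa)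
      then sgn A (.vK2 i aa) else 0) = 0 := by
    rw [Finset.sum_congr rfl fun i _ => Finset.sum_congr rfl fun aa _ =>
      show (if (reductionGraph n m p q p' q' ep1 ep2).Adj (RVert.eS2 l c) (.vK2 i aa)
          then sgn A (.vK2 i aa) else 0) = 0 from by
        simp [reductionGraph, radj]]
    simp
  have c_vS1 : (∑ i : Fin n, ∑ aa : Fin p,
      if (reductionGraph n m p q p' q' ep1 ep2).Adj (RVert.eS2 l c) (.vS1 i aa)
      then sgn A (.vS1 i aa) else 0) = 0 := by
    rw [Finset.sum_congr rfl fun i _ => Finset.sum_congr rfl fun aa _ =>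
      show (if (reductionGraph n m p q p' q' ep1 ep2).Adj (RVert.eS2 l c) (.vS1 i aa)
          then sgn A (.vS1 i aa) else 0) = 0 from by
        simp [reductionGraph, radj]]
    simp
  have c_vS2 : (∑ i : Fin n, ∑ aa : Fin p,
      if (reductionGraph n m p q p' q' ep1 ep2).Adj (RVert.eS2 l c) (.vS2 i aa)
      then sgn A (.vS2 i aa) else 0) = 0 := by
    rw [Finset.sum_congr rfl fun i _ => Finset.sum_congr rfl fun aa _ =>
      show (if (reductionGraph n m p q p' q' ep1 ep2).Adj (RVert.eS2 l c) (.vS2 i aa)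
          then sgn A (.vS2 i aa) else 0) = 0 from by
        simp [reductionGraph, radj]]
    simp
  have c_eK1 : (∑ l2 : Fin m, ∑ c2 : Fin q',
      if (reductionGraph n m p q p' q' ep1 ep2).Adj (RVert.eS2 l c) (.eK1 l2 c2)
      then sgn A (.eK1 l2 c2) else 0) = 0 := by
    rw [Finset.sum_congr rfl fun l2 _ => Finset.sum_congr rfl fun c2 _ =>
      show (if (reductionGraph n m p q p' q' ep1 ep2).Adj (RVert.eS2 l c) (.eK1 l2 c2)
          then sgn A (.eK1 l2 c2) else 0) = 0 from by
        simp [reductionGraph, radj]]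
    simp
  have c_eK2 : (∑ l2 : Fin m, ∑ c2 : Fin q',
      if (reductionGraph n m p q p' q' ep1 ep2).Adj (RVert.eS2 l c) (.eK2 l2 c2)
      then sgn A (.eK2 l2 c2) else 0) = bK2 A l := by
    rw [Finset.sum_congr rfl fun l2 _ => Finset.sum_congr rfl fun c2 _ =>
      show (if (reductionGraph n m p q p' q' ep1 ep2).Adj (RVert.eS2 l c) (.eK2 l2 c2)
          then sgn A (.eK2 l2 c2) else 0)
        = if l2 = l then sgn A (.eK2 l2 c2) else 0 from by
        rcases eq_or_ne l l2 with h1 | h1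
        · subst h1; simp [reductionGraph, radj]
        · have h1' : ¬ l2 = l := fun hh => h1 hh.symm
          simp [reductionGraph, radj, h1, h1']]
    rw [Finset.sum_congr rfl fun l2 _ =>
      show (∑ c2 : Fin q', if l2 = l then sgn A (.eK2 l2 c2) else 0)
        = if l2 = l then (∑ c2 : Fin q', sgn A (.eK2 l2 c2)) else 0 from by
        split <;> simp]
    rw [Finset.sum_ite_eq' Finset.univ l]
    simp [bK2]
  have c_eS1 : (∑ l2 : Fin m, ∑ c2 : Fin p',
      if (reductionGraph n m p q p' q' ep1 ep2).Adj (RVert.eS2 l c) (.eS1 l2 c2)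
      then sgn A (.eS1 l2 c2) else 0) = 0 := by
    rw [Finset.sum_congr rfl fun l2 _ => Finset.sum_congr rfl fun c2 _ =>
      show (if (reductionGraph n m p q p' q' ep1 ep2).Adj (RVert.eS2 l c) (.eS1 l2 c2)
          then sgn A (.eS1 l2 c2) else 0) = 0 from by
        simp [reductionGraph, radj]]
    simp
  have c_eS2 : (∑ l2 : Fin m, ∑ c2 : Fin p',
      if (reductionGraph n m p q p' q' ep1 ep2).Adj (RVert.eS2 l c) (.eS2 l2 c2)
      then sgn A (.eS2 l2 c2) else 0) = 0 := by
    rw [Finset.sum_congr rfl fun l2 _ => Finset.sum_congr rfl fun c2 _ =>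
      show (if (reductionGraph n m p q p' q' ep1 ep2).Adj (RVert.eS2 l c) (.eS2 l2 c2)
          then sgn A (.eS2 l2 c2) else 0) = 0 from by
        simp [reductionGraph, radj]]
    simp
  have c_link : (∑ lr0 : Bool, ∑ s0 : Bool, ∑ j0 : Fin m,
      if (reductionGraph n m p q p' q' ep1 ep2).Adj (RVert.eS2 l c) (.link lr0 s0 j0)
      then sgn A (.link lr0 s0 j0) else 0) = tE A l := by
    unfold tE
    refine Finset.sum_congr rfl fun lr0 _ => Finset.sum_congr rfl fun s0 _ =>
      Finset.sum_congr rfl fun j0 _ => ?_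
    by_cases h1 : l < j0 <;> simp [reductionGraph, radj, h1]
  rw [c_vK1, c_vK2, c_vS1, c_vS2, c_eK1, c_eK2, c_eS1, c_eS2, c_link]
  ring

end Acct2
end MCAux
namespace MCAux
open Finset
section Acct3
open scoped Classical
variable {n m p q p' q' : ℕ} (ep1 ep2 : Fin m → Fin n) (A : Set (RVert n m p q p' q'))

noncomputable def LL (lr s : Bool) (j : Fin m) : ℤ :=
  ∑ lr0 : Bool, ∑ s0 : Bool, ∑ j0 : Fin m,
    if (reductionGraph n m p q p' q' ep1 ep2).Adj (.link lr s j) (.link lr0 s0 j0)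
    then sgn A (.link lr0 s0 j0) else 0

lemma NB_link (lr s : Bool) (j : Fin m) :
    NB ep1 ep2 A (.link lr s j) =
      (∑ k : Fin n, if linkIdx ep1 ep2 lr j < k then aK1 A k else 0)
      + (∑ k : Fin n, if linkIdx ep1 ep2 lr j ≤ k then aK2 A k else 0)
      + (∑ k : Fin n, if linkIdx ep1 ep2 lr j < k then aS1 A k else 0)
      + (∑ k : Fin n, if linkIdx ep1 ep2 lr j < k then aS2 A k else 0)
      + (∑ l : Fin m, if l ≤ j then bK1 A l else 0)
      + (∑ l : Fin m, if l < j then bK2 A l else 0)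
      + (∑ l : Fin m, if l < j then bS1 A l else 0)
      + (if lr = false then bS1 A j else 0)
      + (∑ l : Fin m, if l < j then bS2 A l else 0)
      + LL ep1 ep2 A lr s j := by
  unfold NB
  rw [sum_rv]
  have c_vK1 : (∑ k0 : Fin n, ∑ a0 : Fin q,
      if (reductionGraph n m p q p' q' ep1 ep2).Adj (.link lr s j) (.vK1 k0 a0)
      then sgn A (.vK1 k0 a0) else 0)
      = ∑ k : Fin n, if linkIdx ep1 ep2 lr j < k then aK1 A k else 0 := by
    rw [Finset.sum_congr rfl fun k0 _ => Finset.sum_congr rfl fun a0 _ =>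
      show (if (reductionGraph n m p q p' q' ep1 ep2).Adj (.link lr s j) (.vK1 k0 a0)
          then sgn A (.vK1 k0 a0) else 0)
        = if linkIdx ep1 ep2 lr j < k0 then sgn A (.vK1 k0 a0) else 0 from by
        by_cases h : linkIdx ep1 ep2 lr j < k0 <;> simp [reductionGraph, radj, h]]
    exact Finset.sum_congr rfl fun k0 _ => by split <;> simp [aK1]
  have c_vK2 : (∑ k0 : Fin n, ∑ a0 : Fin q,
      if (reductionGraph n m p q p' q' ep1 ep2).Adj (.link lr s j) (.vK2 k0 a0)
      then sgn A (.vK2 k0 a0) else 0)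
      = ∑ k : Fin n, if linkIdx ep1 ep2 lr j ≤ k then aK2 A k else 0 := by
    rw [Finset.sum_congr rfl fun k0 _ => Finset.sum_congr rfl fun a0 _ =>
      show (if (reductionGraph n m p q p' q' ep1 ep2).Adj (.link lr s j) (.vK2 k0 a0)
          then sgn A (.vK2 k0 a0) else 0)
        = if linkIdx ep1 ep2 lr j ≤ k0 then sgn A (.vK2 k0 a0) else 0 from by
        by_cases h : linkIdx ep1 ep2 lr j ≤ k0 <;> simp [reductionGraph, radj, h]]
    exact Finset.sum_congr rfl fun k0 _ => by split <;> simp [aK2]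
  have c_vS1 : (∑ k0 : Fin n, ∑ a0 : Fin p,
      if (reductionGraph n m p q p' q' ep1 ep2).Adj (.link lr s j) (.vS1 k0 a0)
      then sgn A (.vS1 k0 a0) else 0)
      = ∑ k : Fin n, if linkIdx ep1 ep2 lr j < k then aS1 A k else 0 := by
    rw [Finset.sum_congr rfl fun k0 _ => Finset.sum_congr rfl fun a0 _ =>
      show (if (reductionGraph n m p q p' q' ep1 ep2).Adj (.link lr s j) (.vS1 k0 a0)
          then sgn A (.vS1 k0 a0) else 0)
        = if linkIdx ep1 ep2 lr j < k0 then sgn A (.vS1 k0 a0) else 0 from by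
        by_cases h : linkIdx ep1 ep2 lr j < k0 <;> simp [reductionGraph, radj, h]]
    exact Finset.sum_congr rfl fun k0 _ => by split <;> simp [aS1]
  have c_vS2 : (∑ k0 : Fin n, ∑ a0 : Fin p,
      if (reductionGraph n m p q p' q' ep1 ep2).Adj (.link lr s j) (.vS2 k0 a0)
      then sgn A (.vS2 k0 a0) else 0)
      = ∑ k : Fin n, if linkIdx ep1 ep2 lr j < k then aS2 A k else 0 := by
    rw [Finset.sum_congr rfl fun k0 _ => Finset.sum_congr rfl fun a0 _ =>
      show (if (reductionGraph n m p q p' q' ep1 ep2).Adj (.link lr s j) (.vS2 k0 a0)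
          then sgn A (.vS2 k0 a0) else 0)
        = if linkIdx ep1 ep2 lr j < k0 then sgn A (.vS2 k0 a0) else 0 from by
        by_cases h : linkIdx ep1 ep2 lr j < k0 <;> simp [reductionGraph, radj, h]]
    exact Finset.sum_congr rfl fun k0 _ => by split <;> simp [aS2]
  have c_eK1 : (∑ l0 : Fin m, ∑ c0 : Fin q',
      if (reductionGraph n m p q p' q' ep1 ep2).Adj (.link lr s j) (.eK1 l0 c0)
      then sgn A (.eK1 l0 c0) else 0)
      = ∑ l : Fin m, if l ≤ j then bK1 A l else 0 := by
    rw [Finset.sum_congr rfl fun l0 _ => Finset.sum_congr rfl fun c0 _ =>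
      show (if (reductionGraph n m p q p' q' ep1 ep2).Adj (.link lr s j) (.eK1 l0 c0)
          then sgn A (.eK1 l0 c0) else 0)
        = if l0 ≤ j then sgn A (.eK1 l0 c0) else 0 from by
        by_cases h : l0 ≤ j <;> simp [reductionGraph, radj, h]]
    exact Finset.sum_congr rfl fun l0 _ => by split <;> simp [bK1]
  have c_eK2 : (∑ l0 : Fin m, ∑ c0 : Fin q',
      if (reductionGraph n m p q p' q' ep1 ep2).Adj (.link lr s j) (.eK2 l0 c0)
      then sgn A (.eK2 l0 c0) else 0)
      = ∑ l : Fin m, if l < j then bK2 A l else 0 := by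
    rw [Finset.sum_congr rfl fun l0 _ => Finset.sum_congr rfl fun c0 _ =>
      show (if (reductionGraph n m p q p' q' ep1 ep2).Adj (.link lr s j) (.eK2 l0 c0)
          then sgn A (.eK2 l0 c0) else 0)
        = if l0 < j then sgn A (.eK2 l0 c0) else 0 from by
        by_cases h : l0 < j <;> simp [reductionGraph, radj, h]]
    exact Finset.sum_congr rfl fun l0 _ => by split <;> simp [bK2]
  have c_eS2 : (∑ l0 : Fin m, ∑ c0 : Fin p',
      if (reductionGraph n m p q p' q' ep1 ep2).Adj (.link lr s j) (.eS2 l0 c0)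
      then sgn A (.eS2 l0 c0) else 0)
      = ∑ l : Fin m, if l < j then bS2 A l else 0 := by
    rw [Finset.sum_congr rfl fun l0 _ => Finset.sum_congr rfl fun c0 _ =>
      show (if (reductionGraph n m p q p' q' ep1 ep2).Adj (.link lr s j) (.eS2 l0 c0)
          then sgn A (.eS2 l0 c0) else 0)
        = if l0 < j then sgn A (.eS2 l0 c0) else 0 from by
        by_cases h : l0 < j <;> simp [reductionGraph, radj, h]]
    exact Finset.sum_congr rfl fun l0 _ => by split <;> simp [bS2]
  have c_eS1 : (∑ l0 : Fin m, ∑ c0 : Fin p',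
      if (reductionGraph n m p q p' q' ep1 ep2).Adj (.link lr s j) (.eS1 l0 c0)
      then sgn A (.eS1 l0 c0) else 0)
      = (∑ l : Fin m, if l < j then bS1 A l else 0) + (if lr = false then bS1 A j else 0) := by
    rw [Finset.sum_congr rfl fun l0 _ => Finset.sum_congr rfl fun c0 _ =>
      show (if (reductionGraph n m p q p' q' ep1 ep2).Adj (.link lr s j) (.eS1 l0 c0)
          then sgn A (.eS1 l0 c0) else 0)
        = (if l0 < j then sgn A (.eS1 l0 c0) else 0)
          + (if lr = false then (if l0 = j then sgn A (.eS1 l0 c0) else 0) else 0) from by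
        rcases lt_trichotomy l0 j with h | h | h
        · have h2 : ¬ l0 = j := ne_of_lt h
          by_cases hlr : lr = false <;> simp [reductionGraph, radj, h, h2, hlr]
        · subst h
          by_cases hlr : lr = false <;> simp [reductionGraph, radj, lt_irrefl, hlr]
        · have h2 : ¬ l0 < j := not_lt_of_gt h
          have h3 : ¬ l0 = j := ne_of_gt h
          by_cases hlr : lr = false <;> simp [reductionGraph, radj, h2, h3, hlr]]
    rw [Finset.sum_congr rfl fun l0 _ => Finset.sum_add_distrib, Finset.sum_add_distrib]
    congr 1
    · exact Finset.sum_congr rfl fun l0 _ => by split <;> simp [bS1]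
    · by_cases hlr : lr = false
      · simp only [hlr, if_true]
        rw [Finset.sum_congr rfl fun l0 _ =>
          show (∑ c0 : Fin p', if l0 = j then sgn A (.eS1 l0 c0) else 0)
            = if l0 = j then (∑ c0 : Fin p', sgn A (.eS1 l0 c0)) else 0 from by
            split <;> simp]
        rw [Finset.sum_ite_eq' Finset.univ j]
        simp [bS1]
      · simp [hlr]
  have c_link : (∑ lr0 : Bool, ∑ s0 : Bool, ∑ j0 : Fin m,
      if (reductionGraph n m p q p' q' ep1 ep2).Adj (.link lr s j) (.link lr0 s0 j0)
      then sgn A (.link lr0 s0 j0) else 0) = LL ep1 ep2 A lr s j := rfl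
  rw [c_vK1, c_vK2, c_vS1, c_vS2, c_eK1, c_eK2, c_eS1, c_eS2, c_link]
  ring

/-- bound helper for triple sums over links -/
lemma abs_triple_le (g : Bool → Bool → Fin m → ℤ) (hg : ∀ lr s jj, |g lr s jj| ≤ 1) :
    |∑ lr : Bool, ∑ s : Bool, ∑ jj : Fin m, g lr s jj| ≤ 4 * m := by
  have step1 : ∀ (lr s : Bool), |∑ jj : Fin m, g lr s jj| ≤ (m:ℤ) := by
    intro lr s
    calc |∑ jj : Fin m, g lr s jj| ≤ ∑ jj : Fin m, |g lr s jj| := Finset.abs_sum_le_sum_abs _ _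
      _ ≤ ∑ _jj : Fin m, 1 := Finset.sum_le_sum fun jj _ => hg lr s jj
      _ = (m:ℤ) := by simp
  have step2 : ∀ lr : Bool, |∑ s : Bool, ∑ jj : Fin m, g lr s jj| ≤ 2 * m := by
    intro lr
    calc |∑ s : Bool, ∑ jj : Fin m, g lr s jj| ≤ ∑ s : Bool, |∑ jj : Fin m, g lr s jj| :=
        Finset.abs_sum_le_sum_abs _ _
      _ ≤ ∑ _s : Bool, (m:ℤ) := Finset.sum_le_sum fun s _ => step1 lr s
      _ = 2 * m := by simp [Fintype.sum_bool]; try ring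
  calc |∑ lr : Bool, ∑ s : Bool, ∑ jj : Fin m, g lr s jj|
      ≤ ∑ lr : Bool, |∑ s : Bool, ∑ jj : Fin m, g lr s jj| := Finset.abs_sum_le_sum_abs _ _
    _ ≤ ∑ _lr : Bool, (2 * m : ℤ) := Finset.sum_le_sum fun lr _ => step2 lr
    _ = 4 * m := by simp [Fintype.sum_bool]; try ring

lemma abs_tH_le (k : Fin n) : |tH ep1 ep2 A k| ≤ 4 * m := by
  apply abs_triple_le
  intro lr s jj
  split
  · exact sgn_abs A _
  · simp

lemma abs_tE_le (l : Fin m) : |tE A l| ≤ 4 * m := by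
  apply abs_triple_le
  intro lr s jj
  split
  · exact sgn_abs A _
  · simp

lemma abs_LL_le (lr s : Bool) (j : Fin m) : |LL ep1 ep2 A lr s j| ≤ 4 * m := by
  apply abs_triple_le
  intro lr0 s0 jj
  split
  · exact sgn_abs A _
  · simp

lemma abs_xE_le (l : Fin m) : |xE A l| ≤ 4 := by
  have step1 : ∀ lr : Bool, |∑ s : Bool, sgn A (RVert.link lr s l)| ≤ 2 := by
    intro lr
    calc |∑ s : Bool, sgn A (RVert.link lr s l)| ≤ ∑ s : Bool, |sgn A (RVert.link lr s l)| :=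
        Finset.abs_sum_le_sum_abs _ _
      _ ≤ ∑ _s : Bool, 1 := Finset.sum_le_sum fun s _ => sgn_abs A _
      _ = 2 := by simp [Fintype.sum_bool]
  calc |xE A l| ≤ ∑ lr : Bool, |∑ s : Bool, sgn A (RVert.link lr s l)| :=
      Finset.abs_sum_le_sum_abs _ _
    _ ≤ ∑ _lr : Bool, (2:ℤ) := Finset.sum_le_sum fun lr _ => step1 lr
    _ = 4 := by simp [Fintype.sum_bool]

lemma abs_yE_le (l : Fin m) : |yE A l| ≤ 2 := by
  calc |yE A l| ≤ ∑ s : Bool, |sgn A (RVert.link false s l)| := Finset.abs_sum_le_sum_abs _ _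
    _ ≤ ∑ _s : Bool, 1 := Finset.sum_le_sum fun s _ => sgn_abs A _
    _ = 2 := by simp [Fintype.sum_bool]

/-- occupancy: if a signed part-sum is not `-N`, some member is in `A` -/
lemma exists_mem_of_sum_ne_neg {N : ℕ} (f : Fin N → RVert n m p q p' q')
    (h : (∑ x : Fin N, sgn A (f x)) ≠ -(N:ℤ)) : ∃ x, f x ∈ A := by
  by_contra hc
  push_neg at hc
  apply h
  rw [Finset.sum_congr rfl fun x _ => sgn_of_not_mem (hc x)]
  simp

lemma exists_not_mem_of_sum_ne {N : ℕ} (f : Fin N → RVert n m p q p' q')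
    (h : (∑ x : Fin N, sgn A (f x)) ≠ (N:ℤ)) : ∃ x, f x ∉ A := by
  by_contra hc
  push_neg at hc
  apply h
  rw [Finset.sum_congr rfl fun x _ => sgn_of_mem (hc x)]
  simp

lemma sum_sgn_of_all_mem {N : ℕ} (f : Fin N → RVert n m p q p' q')
    (h : ∀ x, f x ∈ A) : (∑ x : Fin N, sgn A (f x)) = (N:ℤ) := by
  rw [Finset.sum_congr rfl fun x _ => sgn_of_mem (h x)]
  simp

lemma abs_part_le {N : ℕ} (f : Fin N → RVert n m p q p' q') :
    |∑ x : Fin N, sgn A (f x)| ≤ (N:ℤ) := by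
  have := abs_sgn_sum (Finset.univ : Finset (Fin N)) A f
  simpa using this

end Acct3
end MCAux
namespace MCAux
open Finset
section Inst
open scoped Classical
variable {n m p q p' q' : ℕ} (ep1 ep2 : Fin m → Fin n)
variable (A B : Set (RVert n m p q p' q'))

lemma sum_compl_eq (F : RVert n m p q p' q' → ℤ) (M : Finset (RVert n m p q p' q')) :
    ∑ v ∈ Mᶜ, F v = (∑ v, F v) - ∑ v ∈ M, F v := by
  have := Finset.sum_compl_add_sum M F
  linarith


lemma single_le
    (hmax : IsMaxCut (reductionGraph n m p q p' q' ep1 ep2) A B) (u : RVert n m p q p' q') :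
    sgn A u * NB ep1 ep2 A u ≤ 0 := by
  have h := master (reductionGraph n m p q p' q' ep1 ep2) hmax {u}
  rw [Finset.sum_singleton, sum_compl_eq, Finset.sum_singleton, Wg_self, sub_zero, SW_eq] at h
  exact h

lemma pair_le
    (hmax : IsMaxCut (reductionGraph n m p q p' q' ep1 ep2) A B) (u v : RVert n m p q p' q') (huv : u ≠ v) :
    sgn A u * NB ep1 ep2 A u + sgn A v * NB ep1 ep2 A v
      - 2 * Wg (reductionGraph n m p q p' q' ep1 ep2) A u v ≤ 0 := by
  have h := master (reductionGraph n m p q p' q' ep1 ep2) hmax {u, v}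
  rw [Finset.sum_pair huv] at h
  rw [sum_compl_eq, sum_compl_eq, Finset.sum_pair huv, Finset.sum_pair huv] at h
  rw [Wg_self, Wg_self, SW_eq, SW_eq] at h
  rw [Wg_symm (reductionGraph n m p q p' q' ep1 ep2) A v u] at h
  linarith

lemma bigflip_H
    (hmax : IsMaxCut (reductionGraph n m p q p' q' ep1 ep2) A B) (k : Fin n) :
    aK2 A k * aK1 A k + aK2 A k * (tH ep1 ep2 A k + eH ep1 ep2 A k)
      + aS2 A k * tH ep1 ep2 A k ≤ 0 := by
  classical
  set M : Finset (RVert n m p q p' q') :=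
    (Finset.univ.image fun a : Fin q => RVert.vK2 k a)
    ∪ (Finset.univ.image fun c : Fin p => RVert.vS2 k c) with hM
  have hdisj : Disjoint (Finset.univ.image fun a : Fin q => (RVert.vK2 k a : RVert n m p q p' q'))
      (Finset.univ.image fun c : Fin p => RVert.vS2 k c) := by
    rw [Finset.disjoint_left]
    rintro u hu1 hu2
    simp only [Finset.mem_image, Finset.mem_univ, true_and] at hu1 hu2
    obtain ⟨a, ha⟩ := hu1
    obtain ⟨c, hc⟩ := hu2
    rw [← ha] at hc
    exact absurd hc (by simp)
  have hsumM : ∀ F : RVert n m p q p' q' → ℤ,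
      (∑ u ∈ M, F u) = (∑ a : Fin q, F (.vK2 k a)) + (∑ c : Fin p, F (.vS2 k c)) := by
    intro F
    rw [hM, Finset.sum_union hdisj, Finset.sum_image (by intro a _ a' _ h; simpa using h),
      Finset.sum_image (by intro a _ a' _ h; simpa using h)]
  have h := master (reductionGraph n m p q p' q' ep1 ep2) hmax M
  rw [Finset.sum_congr rfl fun u _ =>
      sum_compl_eq (Wg (reductionGraph n m p q p' q' ep1 ep2) A u) M] at h
  rw [Finset.sum_sub_distrib] at h
  rw [hsumM, hsumM] at h
  rw [Finset.sum_congr rfl (fun a (_ : a ∈ Finset.univ) => hsumM _),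
      Finset.sum_congr rfl (fun c (_ : c ∈ Finset.univ) => hsumM _)] at h
  rw [Finset.sum_add_distrib, Finset.sum_add_distrib] at h
  have hW11 : (∑ a : Fin q, ∑ aa : Fin q,
      Wg (reductionGraph n m p q p' q' ep1 ep2) A (.vK2 k a) (.vK2 k aa))
      = aK2 A k * aK2 A k - q := by
    have hpt : ∀ a aa : Fin q, Wg (reductionGraph n m p q p' q' ep1 ep2) A (.vK2 k a) (.vK2 k aa)
        = if a = aa then 0 else sgn A (.vK2 k a) * sgn A (.vK2 k aa) := by
      intro a aa
      by_cases hx : a = aa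
      · subst hx; rw [if_pos rfl]; exact Wg_self _ A _
      · rw [if_neg hx]
        unfold Wg
        rw [if_pos ⟨by simp [hx], Or.inl rfl⟩]
    rw [Finset.sum_congr rfl fun a _ => Finset.sum_congr rfl fun aa _ => hpt a aa]
    rw [Finset.sum_congr rfl fun a _ =>
      sum_erase_one (fun aa => sgn A (.vK2 k a) * sgn A (.vK2 k aa)) a]
    rw [Finset.sum_sub_distrib]
    rw [Finset.sum_congr rfl fun a (_ : a ∈ Finset.univ) =>
      (Finset.mul_sum Finset.univ (fun aa => sgn A (.vK2 k aa)) (sgn A (.vK2 k a))).symm]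
    rw [← Finset.sum_mul]
    rw [Finset.sum_congr rfl fun a (_ : a ∈ Finset.univ) => sgn_sq A (.vK2 k a)]
    simp [aK2, mul_comm]
  have hW12 : (∑ a : Fin q, ∑ c : Fin p,
      Wg (reductionGraph n m p q p' q' ep1 ep2) A (.vK2 k a) (.vS2 k c))
      = aK2 A k * aS2 A k := by
    have hpt : ∀ (a : Fin q) (c : Fin p),
        Wg (reductionGraph n m p q p' q' ep1 ep2) A (.vK2 k a) (.vS2 k c)
        = sgn A (.vK2 k a) * sgn A (.vS2 k c) := by
      intro a c
      unfold Wg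
      rw [if_pos ⟨by simp, Or.inl rfl⟩]
    rw [Finset.sum_congr rfl fun a _ => Finset.sum_congr rfl fun c _ => hpt a c]
    rw [Finset.sum_congr rfl fun a (_ : a ∈ Finset.univ) =>
      (Finset.mul_sum Finset.univ (fun c => sgn A (.vS2 k c)) (sgn A (.vK2 k a))).symm]
    rw [← Finset.sum_mul]
    rfl
  have hW21 : (∑ c : Fin p, ∑ a : Fin q,
      Wg (reductionGraph n m p q p' q' ep1 ep2) A (.vS2 k c) (.vK2 k a))
      = aS2 A k * aK2 A k := by
    have hpt : ∀ (c : Fin p) (a : Fin q),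
        Wg (reductionGraph n m p q p' q' ep1 ep2) A (.vS2 k c) (.vK2 k a)
        = sgn A (.vS2 k c) * sgn A (.vK2 k a) := by
      intro c a
      unfold Wg
      rw [if_pos ⟨by simp, Or.inr rfl⟩]
    rw [Finset.sum_congr rfl fun c _ => Finset.sum_congr rfl fun a _ => hpt c a]
    rw [Finset.sum_congr rfl fun c (_ : c ∈ Finset.univ) =>
      (Finset.mul_sum Finset.univ (fun a => sgn A (.vK2 k a)) (sgn A (.vS2 k c))).symm]
    rw [← Finset.sum_mul]
    rfl
  have hW22 : (∑ c : Fin p, ∑ c2 : Fin p,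
      Wg (reductionGraph n m p q p' q' ep1 ep2) A (.vS2 k c) (.vS2 k c2)) = 0 := by
    have hpt : ∀ c c2 : Fin p,
        Wg (reductionGraph n m p q p' q' ep1 ep2) A (.vS2 k c) (.vS2 k c2) = 0 := by
      intro c c2
      unfold Wg
      rw [if_neg]
      rintro ⟨hne, hh | hh⟩ <;> exact hh
    rw [Finset.sum_congr rfl fun c _ => Finset.sum_congr rfl fun c2 _ => hpt c c2]
    simp
  have hP1 : (∑ a : Fin q, ∑ v, Wg (reductionGraph n m p q p' q' ep1 ep2) A (.vK2 k a) v)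
      = aK2 A k * (aK1 A k + aK2 A k + aS2 A k + tH ep1 ep2 A k + eH ep1 ep2 A k) - q := by
    have hpt : ∀ a : Fin q,
        (∑ v, Wg (reductionGraph n m p q p' q' ep1 ep2) A (.vK2 k a) v)
        = sgn A (.vK2 k a)
            * (aK1 A k + aK2 A k + aS2 A k + tH ep1 ep2 A k + eH ep1 ep2 A k) - 1 := by
      intro a
      rw [SW_eq, NB_vK2]
      have hs := sgn_sq A (RVert.vK2 k a)
      nlinarith [hs]
    rw [Finset.sum_congr rfl fun a _ => hpt a, Finset.sum_sub_distrib, ← Finset.sum_mul]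
    simp [aK2]
  have hP2 : (∑ c : Fin p, ∑ v, Wg (reductionGraph n m p q p' q' ep1 ep2) A (.vS2 k c) v)
      = aS2 A k * (aK2 A k + tH ep1 ep2 A k) := by
    have hpt : ∀ c : Fin p,
        (∑ v, Wg (reductionGraph n m p q p' q' ep1 ep2) A (.vS2 k c) v)
        = sgn A (.vS2 k c) * (aK2 A k + tH ep1 ep2 A k) := by
      intro c
      rw [SW_eq, NB_vS2]
    rw [Finset.sum_congr rfl fun c _ => hpt c, ← Finset.sum_mul]
    rfl
  rw [hP1, hP2, hW11, hW12, hW21, hW22] at h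
  nlinarith [h]

lemma bigflip_E
    (hmax : IsMaxCut (reductionGraph n m p q p' q' ep1 ep2) A B) (l : Fin m) :
    bK2 A l * bK1 A l + (bK2 A l + bS2 A l) * tE A l ≤ 0 := by
  classical
  set M : Finset (RVert n m p q p' q') :=
    (Finset.univ.image fun c : Fin q' => RVert.eK2 l c)
    ∪ (Finset.univ.image fun c : Fin p' => RVert.eS2 l c) with hM
  have hdisj : Disjoint (Finset.univ.image fun c : Fin q' => (RVert.eK2 l c : RVert n m p q p' q'))
      (Finset.univ.image fun c : Fin p' => RVert.eS2 l c) := by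
    rw [Finset.disjoint_left]
    rintro u hu1 hu2
    simp only [Finset.mem_image, Finset.mem_univ, true_and] at hu1 hu2
    obtain ⟨a, ha⟩ := hu1
    obtain ⟨c, hc⟩ := hu2
    rw [← ha] at hc
    exact absurd hc (by simp)
  have hsumM : ∀ F : RVert n m p q p' q' → ℤ,
      (∑ u ∈ M, F u) = (∑ c : Fin q', F (.eK2 l c)) + (∑ c : Fin p', F (.eS2 l c)) := by
    intro F
    rw [hM, Finset.sum_union hdisj, Finset.sum_image (by intro a _ a' _ h; simpa using h),
      Finset.sum_image (by intro a _ a' _ h; simpa using h)]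
  have h := master (reductionGraph n m p q p' q' ep1 ep2) hmax M
  rw [Finset.sum_congr rfl fun u _ =>
      sum_compl_eq (Wg (reductionGraph n m p q p' q' ep1 ep2) A u) M] at h
  rw [Finset.sum_sub_distrib] at h
  rw [hsumM, hsumM] at h
  rw [Finset.sum_congr rfl (fun a (_ : a ∈ Finset.univ) => hsumM _),
      Finset.sum_congr rfl (fun c (_ : c ∈ Finset.univ) => hsumM _)] at h
  rw [Finset.sum_add_distrib, Finset.sum_add_distrib] at h
  have hW11 : (∑ a : Fin q', ∑ aa : Fin q',
      Wg (reductionGraph n m p q p' q' ep1 ep2) A (.eK2 l a) (.eK2 l aa))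
      = bK2 A l * bK2 A l - q' := by
    have hpt : ∀ a aa : Fin q', Wg (reductionGraph n m p q p' q' ep1 ep2) A (.eK2 l a) (.eK2 l aa)
        = if a = aa then 0 else sgn A (.eK2 l a) * sgn A (.eK2 l aa) := by
      intro a aa
      by_cases hx : a = aa
      · subst hx; rw [if_pos rfl]; exact Wg_self _ A _
      · rw [if_neg hx]
        unfold Wg
        rw [if_pos ⟨by simp [hx], Or.inl rfl⟩]
    rw [Finset.sum_congr rfl fun a _ => Finset.sum_congr rfl fun aa _ => hpt a aa]
    rw [Finset.sum_congr rfl fun a _ =>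
      sum_erase_one (fun aa => sgn A (.eK2 l a) * sgn A (.eK2 l aa)) a]
    rw [Finset.sum_sub_distrib]
    rw [Finset.sum_congr rfl fun a (_ : a ∈ Finset.univ) =>
      (Finset.mul_sum Finset.univ (fun aa => sgn A (.eK2 l aa)) (sgn A (.eK2 l a))).symm]
    rw [← Finset.sum_mul]
    rw [Finset.sum_congr rfl fun a (_ : a ∈ Finset.univ) => sgn_sq A (.eK2 l a)]
    simp [bK2, mul_comm]
  have hW12 : (∑ a : Fin q', ∑ c : Fin p',
      Wg (reductionGraph n m p q p' q' ep1 ep2) A (.eK2 l a) (.eS2 l c))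
      = bK2 A l * bS2 A l := by
    have hpt : ∀ (a : Fin q') (c : Fin p'),
        Wg (reductionGraph n m p q p' q' ep1 ep2) A (.eK2 l a) (.eS2 l c)
        = sgn A (.eK2 l a) * sgn A (.eS2 l c) := by
      intro a c
      unfold Wg
      rw [if_pos ⟨by simp, Or.inl rfl⟩]
    rw [Finset.sum_congr rfl fun a _ => Finset.sum_congr rfl fun c _ => hpt a c]
    rw [Finset.sum_congr rfl fun a (_ : a ∈ Finset.univ) =>
      (Finset.mul_sum Finset.univ (fun c => sgn A (.eS2 l c)) (sgn A (.eK2 l a))).symm]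
    rw [← Finset.sum_mul]
    rfl
  have hW21 : (∑ c : Fin p', ∑ a : Fin q',
      Wg (reductionGraph n m p q p' q' ep1 ep2) A (.eS2 l c) (.eK2 l a))
      = bS2 A l * bK2 A l := by
    have hpt : ∀ (c : Fin p') (a : Fin q'),
        Wg (reductionGraph n m p q p' q' ep1 ep2) A (.eS2 l c) (.eK2 l a)
        = sgn A (.eS2 l c) * sgn A (.eK2 l a) := by
      intro c a
      unfold Wg
      rw [if_pos ⟨by simp, Or.inr rfl⟩]
    rw [Finset.sum_congr rfl fun c _ => Finset.sum_congr rfl fun a _ => hpt c a]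
    rw [Finset.sum_congr rfl fun c (_ : c ∈ Finset.univ) =>
      (Finset.mul_sum Finset.univ (fun a => sgn A (.eK2 l a)) (sgn A (.eS2 l c))).symm]
    rw [← Finset.sum_mul]
    rfl
  have hW22 : (∑ c : Fin p', ∑ c2 : Fin p',
      Wg (reductionGraph n m p q p' q' ep1 ep2) A (.eS2 l c) (.eS2 l c2)) = 0 := by
    have hpt : ∀ c c2 : Fin p',
        Wg (reductionGraph n m p q p' q' ep1 ep2) A (.eS2 l c) (.eS2 l c2) = 0 := by
      intro c c2
      unfold Wg
      rw [if_neg]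
      rintro ⟨hne, hh | hh⟩ <;> exact hh
    rw [Finset.sum_congr rfl fun c _ => Finset.sum_congr rfl fun c2 _ => hpt c c2]
    simp
  have hP1 : (∑ a : Fin q', ∑ v, Wg (reductionGraph n m p q p' q' ep1 ep2) A (.eK2 l a) v)
      = bK2 A l * (bK1 A l + bK2 A l + bS2 A l + tE A l) - q' := by
    have hpt : ∀ a : Fin q',
        (∑ v, Wg (reductionGraph n m p q p' q' ep1 ep2) A (.eK2 l a) v)
        = sgn A (.eK2 l a) * (bK1 A l + bK2 A l + bS2 A l + tE A l) - 1 := by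
      intro a
      rw [SW_eq, NB_eK2]
      have hs := sgn_sq A (RVert.eK2 l a)
      nlinarith [hs]
    rw [Finset.sum_congr rfl fun a _ => hpt a, Finset.sum_sub_distrib, ← Finset.sum_mul]
    simp [bK2]
  have hP2 : (∑ c : Fin p', ∑ v, Wg (reductionGraph n m p q p' q' ep1 ep2) A (.eS2 l c) v)
      = bS2 A l * (bK2 A l + tE A l) := by
    have hpt : ∀ c : Fin p',
        (∑ v, Wg (reductionGraph n m p q p' q' ep1 ep2) A (.eS2 l c) v)
        = sgn A (.eS2 l c) * (bK2 A l + tE A l) := by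
      intro c
      rw [SW_eq, NB_eS2]
    rw [Finset.sum_congr rfl fun c _ => hpt c, ← Finset.sum_mul]
    rfl
  rw [hP1, hP2, hW11, hW12, hW21, hW22] at h
  nlinarith [h]

end Inst
end MCAux
namespace MCAux
open Finset
section Pack
open scoped Classical
variable {n m p q p' q' : ℕ} (ep1 ep2 : Fin m → Fin n)
variable (A B : Set (RVert n m p q p' q'))

lemma H_package (hmax : IsMaxCut (reductionGraph n m p q p' q' ep1 ep2) A B)
    (hn4 : (4:ℤ) ≤ (n:ℤ))
    (hQ : 6*(n:ℤ) + 10 ≤ (q:ℤ))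
    (hP : 2*(q:ℤ) + 6*(n:ℤ) + 8 ≤ (p:ℤ))
    (hbig : 6*(n:ℤ)*((p:ℤ) - (q:ℤ)) + 6*(q:ℤ) < (q:ℤ)*(q:ℤ))
    (k : Fin n)
    (htH : |tH ep1 ep2 A k| ≤ 6*(n:ℤ))
    (heH : |eH ep1 ep2 A k| ≤ 6) :
    -8 ≤ aK1 A k + aK2 A k + aS1 A k + aS2 A k := by
  refine (gadget_main (n:ℤ) (p:ℤ) (q:ℤ) (tH ep1 ep2 A k) 0 (eH ep1 ep2 A k) 0 0
    (aK1 A k) (aK2 A k) (aS1 A k) (aS2 A k) hn4 hQ hP hbig ?_ rfl htH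
    (abs_part_le A _) (abs_part_le A _) (abs_part_le A _) (abs_part_le A _)
    ?_ ?_ ?_ ?_ ?_ ?_ ?_ ?_ ?_ ?_ ?_ ?_ ?_).1
  · simpa using heH
  · -- h1
    intro hne
    obtain ⟨a, ha⟩ := exists_mem_of_sum_ne_neg A (fun a : Fin q => RVert.vK1 k a) hne
    have h := single_le ep1 ep2 A B hmax (.vK1 k a)
    rw [NB_vK1, sgn_of_mem ha] at h
    linarith
  · -- h2
    intro hne
    obtain ⟨a, ha⟩ := exists_not_mem_of_sum_ne A (fun a : Fin q => RVert.vK1 k a) hne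
    have h := single_le ep1 ep2 A B hmax (.vK1 k a)
    rw [NB_vK1, sgn_of_not_mem ha] at h
    linarith
  · -- h3
    intro hne
    obtain ⟨a, ha⟩ := exists_mem_of_sum_ne_neg A (fun a : Fin q => RVert.vK2 k a) hne
    have h := single_le ep1 ep2 A B hmax (.vK2 k a)
    rw [NB_vK2, sgn_of_mem ha] at h
    linarith
  · -- h4
    intro hne
    obtain ⟨a, ha⟩ := exists_not_mem_of_sum_ne A (fun a : Fin q => RVert.vK2 k a) hne
    have h := single_le ep1 ep2 A B hmax (.vK2 k a)
    rw [NB_vK2, sgn_of_not_mem ha] at h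
    linarith
  · -- h5
    intro hne
    obtain ⟨c, hc⟩ := exists_mem_of_sum_ne_neg A (fun c : Fin p => RVert.vS1 k c) hne
    have h := single_le ep1 ep2 A B hmax (.vS1 k c)
    rw [NB_vS1, sgn_of_mem hc] at h
    linarith
  · -- h6
    intro hne
    obtain ⟨c, hc⟩ := exists_not_mem_of_sum_ne A (fun c : Fin p => RVert.vS1 k c) hne
    have h := single_le ep1 ep2 A B hmax (.vS1 k c)
    rw [NB_vS1, sgn_of_not_mem hc] at h
    linarith
  · -- h7
    intro hne
    obtain ⟨c, hc⟩ := exists_mem_of_sum_ne_neg A (fun c : Fin p => RVert.vS2 k c) hne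
    have h := single_le ep1 ep2 A B hmax (.vS2 k c)
    rw [NB_vS2, sgn_of_mem hc] at h
    linarith
  · -- h8
    intro hne
    obtain ⟨c, hc⟩ := exists_not_mem_of_sum_ne A (fun c : Fin p => RVert.vS2 k c) hne
    have h := single_le ep1 ep2 A B hmax (.vS2 k c)
    rw [NB_vS2, sgn_of_not_mem hc] at h
    linarith
  · -- h9 : swap K'∩A with S'∩B
    intro hne1 hne2
    obtain ⟨a, ha⟩ := exists_mem_of_sum_ne_neg A (fun a : Fin q => RVert.vK1 k a) hne1
    obtain ⟨c, hc⟩ := exists_not_mem_of_sum_ne A (fun c : Fin p => RVert.vS1 k c) hne2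
    have h := pair_le ep1 ep2 A B hmax (.vK1 k a) (.vS1 k c) (by simp)
    rw [NB_vK1, NB_vS1, sgn_of_mem ha, sgn_of_not_mem hc] at h
    have hw : Wg (reductionGraph n m p q p' q' ep1 ep2) A (.vK1 k a) (.vS1 k c)
        = sgn A (.vK1 k a) * sgn A (.vS1 k c) := by
      unfold Wg
      rw [if_pos ⟨by simp, Or.inl rfl⟩]
    rw [hw, sgn_of_mem ha, sgn_of_not_mem hc] at h
    linarith
  · -- h10 : swap S'∩A with K'∩B
    intro hne1 hne2
    obtain ⟨c, hc⟩ := exists_mem_of_sum_ne_neg A (fun c : Fin p => RVert.vS1 k c) hne1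
    obtain ⟨a, ha⟩ := exists_not_mem_of_sum_ne A (fun a : Fin q => RVert.vK1 k a) hne2
    have h := pair_le ep1 ep2 A B hmax (.vS1 k c) (.vK1 k a) (by simp)
    rw [NB_vK1, NB_vS1, sgn_of_mem hc, sgn_of_not_mem ha] at h
    have hw : Wg (reductionGraph n m p q p' q' ep1 ep2) A (.vS1 k c) (.vK1 k a)
        = sgn A (.vS1 k c) * sgn A (.vK1 k a) := by
      unfold Wg
      rw [if_pos ⟨by simp, Or.inr rfl⟩]
    rw [hw, sgn_of_mem hc, sgn_of_not_mem ha] at h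
    linarith
  · -- h11 : swap K''∩A with S''∩B
    intro hne1 hne2
    obtain ⟨a, ha⟩ := exists_mem_of_sum_ne_neg A (fun a : Fin q => RVert.vK2 k a) hne1
    obtain ⟨c, hc⟩ := exists_not_mem_of_sum_ne A (fun c : Fin p => RVert.vS2 k c) hne2
    have h := pair_le ep1 ep2 A B hmax (.vK2 k a) (.vS2 k c) (by simp)
    rw [NB_vK2, NB_vS2, sgn_of_mem ha, sgn_of_not_mem hc] at h
    have hw : Wg (reductionGraph n m p q p' q' ep1 ep2) A (.vK2 k a) (.vS2 k c)
        = sgn A (.vK2 k a) * sgn A (.vS2 k c) := by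
      unfold Wg
      rw [if_pos ⟨by simp, Or.inl rfl⟩]
    rw [hw, sgn_of_mem ha, sgn_of_not_mem hc] at h
    linarith
  · -- h12 : swap S''∩A with K''∩B
    intro hne1 hne2
    obtain ⟨c, hc⟩ := exists_mem_of_sum_ne_neg A (fun c : Fin p => RVert.vS2 k c) hne1
    obtain ⟨a, ha⟩ := exists_not_mem_of_sum_ne A (fun a : Fin q => RVert.vK2 k a) hne2
    have h := pair_le ep1 ep2 A B hmax (.vS2 k c) (.vK2 k a) (by simp)
    rw [NB_vK2, NB_vS2, sgn_of_mem hc, sgn_of_not_mem ha] at h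
    have hw : Wg (reductionGraph n m p q p' q' ep1 ep2) A (.vS2 k c) (.vK2 k a)
        = sgn A (.vS2 k c) * sgn A (.vK2 k a) := by
      unfold Wg
      rw [if_pos ⟨by simp, Or.inr rfl⟩]
    rw [hw, sgn_of_mem hc, sgn_of_not_mem ha] at h
    linarith
  · -- h13 : big flip
    intro hb hs
    have h := bigflip_H ep1 ep2 A B hmax k
    rw [hb, hs] at h
    linear_combination h

lemma E_package (hmax : IsMaxCut (reductionGraph n m p q p' q' ep1 ep2) A B)
    (hn4 : (4:ℤ) ≤ (n:ℤ))
    (hQ : 6*(n:ℤ) + 10 ≤ (q':ℤ))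
    (hP : 2*(q':ℤ) + 6*(n:ℤ) + 8 ≤ (p':ℤ))
    (hbig : 6*(n:ℤ)*((p':ℤ) - (q':ℤ)) + 6*(q':ℤ) < (q':ℤ)*(q':ℤ))
    (l : Fin m)
    (htE : |tE A l| ≤ 6*(n:ℤ)) :
    -8 ≤ bK1 A l + bK2 A l + bS1 A l + bS2 A l ∧
      (q':ℤ) - (p':ℤ) ≤ bK1 A l + bS1 A l := by
  refine gadget_main (n:ℤ) (p':ℤ) (q':ℤ) (tE A l) (xE A l) 0 (yE A l) 0
    (bK1 A l) (bK2 A l) (bS1 A l) (bS2 A l) hn4 hQ hP hbig ?_ rfl htE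
    (abs_part_le A _) (abs_part_le A _) (abs_part_le A _) (abs_part_le A _)
    ?_ ?_ ?_ ?_ ?_ ?_ ?_ ?_ ?_ ?_ ?_ ?_ ?_
  · have h1 := abs_xE_le A l
    have h2 := abs_yE_le A l
    simp only [abs_zero]
    linarith
  · -- h1
    intro hne
    obtain ⟨c, hc⟩ := exists_mem_of_sum_ne_neg A (fun c : Fin q' => RVert.eK1 l c) hne
    have h := single_le ep1 ep2 A B hmax (.eK1 l c)
    rw [NB_eK1, sgn_of_mem hc] at h
    linarith
  · -- h2
    intro hne
    obtain ⟨c, hc⟩ := exists_not_mem_of_sum_ne A (fun c : Fin q' => RVert.eK1 l c) hne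
    have h := single_le ep1 ep2 A B hmax (.eK1 l c)
    rw [NB_eK1, sgn_of_not_mem hc] at h
    linarith
  · -- h3
    intro hne
    obtain ⟨c, hc⟩ := exists_mem_of_sum_ne_neg A (fun c : Fin q' => RVert.eK2 l c) hne
    have h := single_le ep1 ep2 A B hmax (.eK2 l c)
    rw [NB_eK2, sgn_of_mem hc] at h
    linarith
  · -- h4
    intro hne
    obtain ⟨c, hc⟩ := exists_not_mem_of_sum_ne A (fun c : Fin q' => RVert.eK2 l c) hne
    have h := single_le ep1 ep2 A B hmax (.eK2 l c)
    rw [NB_eK2, sgn_of_not_mem hc] at h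
    linarith
  · -- h5
    intro hne
    obtain ⟨c, hc⟩ := exists_mem_of_sum_ne_neg A (fun c : Fin p' => RVert.eS1 l c) hne
    have h := single_le ep1 ep2 A B hmax (.eS1 l c)
    rw [NB_eS1, sgn_of_mem hc] at h
    linarith
  · -- h6
    intro hne
    obtain ⟨c, hc⟩ := exists_not_mem_of_sum_ne A (fun c : Fin p' => RVert.eS1 l c) hne
    have h := single_le ep1 ep2 A B hmax (.eS1 l c)
    rw [NB_eS1, sgn_of_not_mem hc] at h
    linarith
  · -- h7
    intro hne
    obtain ⟨c, hc⟩ := exists_mem_of_sum_ne_neg A (fun c : Fin p' => RVert.eS2 l c) hne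
    have h := single_le ep1 ep2 A B hmax (.eS2 l c)
    rw [NB_eS2, sgn_of_mem hc] at h
    linarith
  · -- h8
    intro hne
    obtain ⟨c, hc⟩ := exists_not_mem_of_sum_ne A (fun c : Fin p' => RVert.eS2 l c) hne
    have h := single_le ep1 ep2 A B hmax (.eS2 l c)
    rw [NB_eS2, sgn_of_not_mem hc] at h
    linarith
  · -- h9
    intro hne1 hne2
    obtain ⟨a, ha⟩ := exists_mem_of_sum_ne_neg A (fun c : Fin q' => RVert.eK1 l c) hne1
    obtain ⟨c, hc⟩ := exists_not_mem_of_sum_ne A (fun c : Fin p' => RVert.eS1 l c) hne2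
    have h := pair_le ep1 ep2 A B hmax (.eK1 l a) (.eS1 l c) (by simp)
    rw [NB_eK1, NB_eS1, sgn_of_mem ha, sgn_of_not_mem hc] at h
    have hw : Wg (reductionGraph n m p q p' q' ep1 ep2) A (.eK1 l a) (.eS1 l c)
        = sgn A (.eK1 l a) * sgn A (.eS1 l c) := by
      unfold Wg
      rw [if_pos ⟨by simp, Or.inl rfl⟩]
    rw [hw, sgn_of_mem ha, sgn_of_not_mem hc] at h
    linarith
  · -- h10
    intro hne1 hne2
    obtain ⟨c, hc⟩ := exists_mem_of_sum_ne_neg A (fun c : Fin p' => RVert.eS1 l c) hne1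
    obtain ⟨a, ha⟩ := exists_not_mem_of_sum_ne A (fun c : Fin q' => RVert.eK1 l c) hne2
    have h := pair_le ep1 ep2 A B hmax (.eS1 l c) (.eK1 l a) (by simp)
    rw [NB_eK1, NB_eS1, sgn_of_mem hc, sgn_of_not_mem ha] at h
    have hw : Wg (reductionGraph n m p q p' q' ep1 ep2) A (.eS1 l c) (.eK1 l a)
        = sgn A (.eS1 l c) * sgn A (.eK1 l a) := by
      unfold Wg
      rw [if_pos ⟨by simp, Or.inr rfl⟩]
    rw [hw, sgn_of_mem hc, sgn_of_not_mem ha] at h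
    linarith
  · -- h11
    intro hne1 hne2
    obtain ⟨a, ha⟩ := exists_mem_of_sum_ne_neg A (fun c : Fin q' => RVert.eK2 l c) hne1
    obtain ⟨c, hc⟩ := exists_not_mem_of_sum_ne A (fun c : Fin p' => RVert.eS2 l c) hne2
    have h := pair_le ep1 ep2 A B hmax (.eK2 l a) (.eS2 l c) (by simp)
    rw [NB_eK2, NB_eS2, sgn_of_mem ha, sgn_of_not_mem hc] at h
    have hw : Wg (reductionGraph n m p q p' q' ep1 ep2) A (.eK2 l a) (.eS2 l c)
        = sgn A (.eK2 l a) * sgn A (.eS2 l c) := by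
      unfold Wg
      rw [if_pos ⟨by simp, Or.inl rfl⟩]
    rw [hw, sgn_of_mem ha, sgn_of_not_mem hc] at h
    linarith
  · -- h12
    intro hne1 hne2
    obtain ⟨c, hc⟩ := exists_mem_of_sum_ne_neg A (fun c : Fin p' => RVert.eS2 l c) hne1
    obtain ⟨a, ha⟩ := exists_not_mem_of_sum_ne A (fun c : Fin q' => RVert.eK2 l c) hne2
    have h := pair_le ep1 ep2 A B hmax (.eS2 l c) (.eK2 l a) (by simp)
    rw [NB_eK2, NB_eS2, sgn_of_mem hc, sgn_of_not_mem ha] at h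
    have hw : Wg (reductionGraph n m p q p' q' ep1 ep2) A (.eS2 l c) (.eK2 l a)
        = sgn A (.eS2 l c) * sgn A (.eK2 l a) := by
      unfold Wg
      rw [if_pos ⟨by simp, Or.inr rfl⟩]
    rw [hw, sgn_of_mem hc, sgn_of_not_mem ha] at h
    linarith
  · -- h13
    intro hb hs
    have h := bigflip_E ep1 ep2 A B hmax l
    rw [hb, hs] at h
    linear_combination h

end Pack
end MCAux
namespace MCAux
open Finset
section Count
open scoped Classical
variable {n m : ℕ} (ep1 ep2 : Fin m → Fin n)

lemma degree_eq_three (G : SimpleGraph (Fin n))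
    (hcubic : ∀ v : Fin n, (G.neighborSet v).ncard = 3) (v : Fin n) :
    G.degree v = 3 := by
  classical
  rw [← hcubic v]
  rw [Set.ncard_eq_toFinset_card']
  congr 1

lemma two_m_le (G : SimpleGraph (Fin n))
    (hcubic : ∀ v : Fin n, (G.neighborSet v).ncard = 3)
    (hlt : ∀ j, ep1 j < ep2 j)
    (hedges : ∀ u v : Fin n,
      G.Adj u v ↔ ∃ j, (ep1 j = u ∧ ep2 j = v) ∨ (ep1 j = v ∧ ep2 j = u))
    (hinj : Function.Injective fun j => (ep1 j, ep2 j)) :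
    2 * m ≤ 3 * n := by
  classical
  have hdeg : ∑ v : Fin n, G.degree v = 3 * n := by
    rw [Finset.sum_congr rfl fun v _ => degree_eq_three G hcubic v]
    simp [mul_comm]
  have hsum := G.sum_degrees_eq_twice_card_edges
  have hm : m ≤ G.edgeFinset.card := by
    have : (Finset.univ : Finset (Fin m)).card ≤ G.edgeFinset.card := by
      apply Finset.card_le_card_of_injOn (fun j => s(ep1 j, ep2 j))
      · intro j _
        rw [Finset.mem_coe, SimpleGraph.mem_edgeFinset, SimpleGraph.mem_edgeSet]
        exact (hedges _ _).mpr ⟨j, Or.inl ⟨rfl, rfl⟩⟩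
      · intro j _ j' _ hjj
        rw [Sym2.eq_iff] at hjj
        rcases hjj with ⟨h1, h2⟩ | ⟨h1, h2⟩
        · exact hinj (Prod.ext h1 h2)
        · exfalso
          have ha := hlt j
          have hb := hlt j'
          rw [h1, h2] at ha
          exact absurd (ha.trans hb) (lt_irrefl _)
    simpa using this
  omega

lemma links_at_k (G : SimpleGraph (Fin n))
    (hcubic : ∀ v : Fin n, (G.neighborSet v).ncard = 3)
    (hlt : ∀ j, ep1 j < ep2 j)
    (hedges : ∀ u v : Fin n,
      G.Adj u v ↔ ∃ j, (ep1 j = u ∧ ep2 j = v) ∨ (ep1 j = v ∧ ep2 j = u))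
    (hinj : Function.Injective fun j => (ep1 j, ep2 j)) (k : Fin n) :
    (Finset.univ.filter fun j : Fin m => ep1 j = k).card
      + (Finset.univ.filter fun j : Fin m => ep2 j = k).card = 3 := by
  classical
  have hdisj : Disjoint (Finset.univ.filter fun j : Fin m => ep1 j = k)
      (Finset.univ.filter fun j : Fin m => ep2 j = k) := by
    rw [Finset.disjoint_left]
    intro j hj1 hj2
    simp only [Finset.mem_filter] at hj1 hj2
    have := hlt j
    rw [hj1.2, hj2.2] at this
    exact lt_irrefl _ this
  rw [← Finset.card_union_of_disjoint hdisj]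
  rw [← degree_eq_three G hcubic k]
  rw [← Finset.filter_or]
  unfold SimpleGraph.degree
  apply Finset.card_bij (fun j _ => if ep1 j = k then ep2 j else ep1 j)
  · intro j hj
    simp only [Finset.mem_filter, Finset.mem_univ, true_and] at hj
    by_cases hp : ep1 j = k
    · rw [if_pos hp, SimpleGraph.mem_neighborFinset]
      exact (hedges _ _).mpr ⟨j, Or.inl ⟨hp, rfl⟩⟩
    · have hq : ep2 j = k := by tauto
      rw [if_neg hp, SimpleGraph.mem_neighborFinset]
      exact (hedges _ _).mpr ⟨j, Or.inr ⟨rfl, hq⟩⟩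
  · intro j hj j' hj' heq
    simp only [Finset.mem_filter, Finset.mem_univ, true_and] at hj hj'
    by_cases hp : ep1 j = k <;> by_cases hp' : ep1 j' = k
    · rw [if_pos hp, if_pos hp'] at heq
      exact hinj (Prod.ext (hp.trans hp'.symm) heq)
    · rw [if_pos hp, if_neg hp'] at heq
      have hq' : ep2 j' = k := by tauto
      exfalso
      have h1 := hlt j
      have h2 := hlt j'
      rw [hp, heq] at h1
      rw [hq'] at h2
      exact absurd (h1.trans h2) (lt_irrefl _)
    · rw [if_neg hp, if_pos hp'] at heq
      have hq : ep2 j = k := by tauto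
      exfalso
      have h1 := hlt j
      have h2 := hlt j'
      rw [hp', ← heq] at h2
      rw [hq] at h1
      exact absurd (h2.trans h1) (lt_irrefl _)
    · rw [if_neg hp, if_neg hp'] at heq
      have hq : ep2 j = k := by tauto
      have hq' : ep2 j' = k := by tauto
      exact hinj (Prod.ext heq (hq.trans hq'.symm))
  · intro x hx
    rw [SimpleGraph.mem_neighborFinset] at hx
    have hxk : x ≠ k := fun h => by
      rw [h] at hx
      exact G.loopless.irrefl k hx
    obtain ⟨j, hj⟩ := (hedges k x).mp hx
    rcases hj with ⟨h1, h2⟩ | ⟨h1, h2⟩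
    · refine ⟨j, by simp [h1], ?_⟩
      rw [if_pos h1, h2]
    · refine ⟨j, by simp [h2], ?_⟩
      have : ¬ ep1 j = k := by
        rw [h1]
        exact hxk
      rw [if_neg this, h1]

end Count

section Final
open scoped Classical
variable {n m p q p' q' : ℕ} (ep1 ep2 : Fin m → Fin n)
variable (A : Set (RVert n m p q p' q'))

lemma abs_eH_le6 (G : SimpleGraph (Fin n))
    (hcubic : ∀ v : Fin n, (G.neighborSet v).ncard = 3)
    (hlt : ∀ j, ep1 j < ep2 j)
    (hedges : ∀ u v : Fin n,
      G.Adj u v ↔ ∃ j, (ep1 j = u ∧ ep2 j = v) ∨ (ep1 j = v ∧ ep2 j = u))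
    (hinj : Function.Injective fun j => (ep1 j, ep2 j)) (k : Fin n) :
    |eH ep1 ep2 A k| ≤ 6 := by
  classical
  have hcnt := links_at_k ep1 ep2 G hcubic hlt hedges hinj k
  have inner : ∀ lr s : Bool,
      |∑ j : Fin m, if linkIdx ep1 ep2 lr j = k then sgn A (RVert.link lr s j) else 0|
      ≤ ((Finset.univ.filter fun j : Fin m => linkIdx ep1 ep2 lr j = k).card : ℤ) := by
    intro lr s
    rw [← Finset.sum_filter]
    exact abs_sgn_sum _ A _
  have hfilt_f : (Finset.univ.filter fun j : Fin m => linkIdx ep1 ep2 false j = k)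
      = (Finset.univ.filter fun j : Fin m => ep1 j = k) := by
    apply Finset.filter_congr
    intro j _
    simp [linkIdx]
  have hfilt_t : (Finset.univ.filter fun j : Fin m => linkIdx ep1 ep2 true j = k)
      = (Finset.univ.filter fun j : Fin m => ep2 j = k) := by
    apply Finset.filter_congr
    intro j _
    simp [linkIdx]
  set c1 := ((Finset.univ.filter fun j : Fin m => ep1 j = k).card : ℤ)
  set c2 := ((Finset.univ.filter fun j : Fin m => ep2 j = k).card : ℤ)
  have hin : ∀ lr s : Bool,
      |∑ j : Fin m, if linkIdx ep1 ep2 lr j = k then sgn A (RVert.link lr s j) else 0|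
      ≤ if lr then c2 else c1 := by
    intro lr s
    cases lr
    · simpa [hfilt_f] using inner false s
    · simpa [hfilt_t] using inner true s
  have hc : c1 + c2 = 3 := by
    have : ((3:ℕ):ℤ) = 3 := by norm_num
    rw [← this, ← hcnt]
    push_cast
    ring
  unfold eH
  calc |∑ lr : Bool, ∑ s : Bool, ∑ j : Fin m,
        if linkIdx ep1 ep2 lr j = k then sgn A (RVert.link lr s j) else 0|
      ≤ ∑ lr : Bool, |∑ s : Bool, ∑ j : Fin m,
        if linkIdx ep1 ep2 lr j = k then sgn A (RVert.link lr s j) else 0| :=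
        Finset.abs_sum_le_sum_abs _ _
    _ ≤ ∑ lr : Bool, ∑ s : Bool, |∑ j : Fin m,
        if linkIdx ep1 ep2 lr j = k then sgn A (RVert.link lr s j) else 0| :=
        Finset.sum_le_sum fun lr _ => Finset.abs_sum_le_sum_abs _ _
    _ ≤ ∑ lr : Bool, ∑ _s : Bool, (if lr then c2 else c1) :=
        Finset.sum_le_sum fun lr _ => Finset.sum_le_sum fun s _ => hin lr s
    _ = 2 * c1 + 2 * c2 := by rw [Fintype.sum_bool]; simp [Fintype.sum_bool]; ring
    _ ≤ 6 := by linarith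

lemma sum_if_lt_split_n (g : Fin n → ℤ) (i : Fin n) :
    (∑ k : Fin n, if i ≤ k then g k else 0) = g i + ∑ k : Fin n, if i < k then g k else 0 := by
  rw [Finset.sum_congr rfl fun k _ =>
    show (if i ≤ k then g k else 0) = (if i = k then g k else 0) + (if i < k then g k else 0) from by
      rcases lt_trichotomy i k with h | h | h
      · rw [if_pos (le_of_lt h), if_neg (ne_of_lt h), if_pos h]; ring
      · subst h; rw [if_pos (le_refl i), if_pos rfl, if_neg (lt_irrefl i)]; ring
      · rw [if_neg (not_le_of_gt h), if_neg (ne_of_gt h), if_neg (not_lt_of_gt h)]; ring]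
  rw [Finset.sum_add_distrib, Finset.sum_ite_eq Finset.univ i]
  simp

lemma sum_if_lt_split_m (g : Fin m → ℤ) (j : Fin m) :
    (∑ l : Fin m, if l ≤ j then g l else 0) = g j + ∑ l : Fin m, if l < j then g l else 0 := by
  rw [Finset.sum_congr rfl fun l _ =>
    show (if l ≤ j then g l else 0) = (if l = j then g l else 0) + (if l < j then g l else 0) from by
      rcases lt_trichotomy l j with h | h | h
      · rw [if_pos (le_of_lt h), if_neg (ne_of_lt h), if_pos h]; ring
      · subst h; rw [if_pos (le_refl l), if_pos rfl, if_neg (lt_irrefl l)]; ring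
      · rw [if_neg (not_le_of_gt h), if_neg (ne_of_gt h), if_neg (not_lt_of_gt h)]; ring]
  rw [Finset.sum_add_distrib, Finset.sum_ite_eq' Finset.univ j]
  simp

lemma sum_if_split {κ : Type*} [Fintype κ] (P : κ → Prop) [DecidablePred P] (f g : κ → ℤ) :
    (∑ k : κ, if P k then f k + g k else 0)
      = (∑ k : κ, if P k then f k else 0) + (∑ k : κ, if P k then g k else 0) := by
  rw [← Finset.sum_add_distrib]
  exact Finset.sum_congr rfl fun k _ => by split <;> ring

end Final
end MCAux

set_option maxHeartbeats 1000000
open MCAux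

/-- in a maximum cut `[A,B]` of the reduction graph `G'` (with the
specific parameters), if `K''_i ⊆ A` then every link vertex associated with `v_i`
belongs to `B`. -/
theorem reductionGraph_maxCut_link_property (n m : ℕ) (hn : 4 ≤ n) (G : SimpleGraph (Fin n))
    (hcubic : ∀ v : Fin n, (G.neighborSet v).ncard = 3)
    (ep1 ep2 : Fin m → Fin n) (hlt : ∀ j, ep1 j < ep2 j)
    (hedges : ∀ u v : Fin n,
      G.Adj u v ↔ ∃ j, (ep1 j = u ∧ ep2 j = v) ∨ (ep1 j = v ∧ ep2 j = u))
    (hinj : Function.Injective fun j => (ep1 j, ep2 j))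
    (A B : Set (RVert n m (25*n^2 + 30*n) (12*n^2 + 12*n + 1) (11*n^2 + 6*n) (5*n^2 + 1)))
    (hmax : IsMaxCut
      (reductionGraph n m (25*n^2 + 30*n) (12*n^2 + 12*n + 1) (11*n^2 + 6*n) (5*n^2 + 1)
        ep1 ep2) A B)
    (i : Fin n) (hK2A : ∀ aa, RVert.vK2 i aa ∈ A) :
    ∀ (lr s : Bool) (j : Fin m), linkIdx ep1 ep2 lr j = i → RVert.link lr s j ∈ B := by
  classical
  intro lr s j hidx
  by_contra hB
  have hLA : RVert.link lr s j ∈ A := by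
    rcases (Set.ext_iff.mp hmax.1 (RVert.link lr s j)).2 trivial with h | h
    · exact h
    · exact absurd h hB
  -- integer cast facts
  have hn4 : (4:ℤ) ≤ (n:ℤ) := by exact_mod_cast hn
  have hm23 : 2*(m:ℤ) ≤ 3*(n:ℤ) := by exact_mod_cast two_m_le ep1 ep2 G hcubic hlt hedges hinj
  have eQ : ((12*n^2 + 12*n + 1 : ℕ):ℤ) = 12*(n:ℤ)^2 + 12*(n:ℤ) + 1 := by push_cast; ring
  have eP : ((25*n^2 + 30*n : ℕ):ℤ) = 25*(n:ℤ)^2 + 30*(n:ℤ) := by push_cast; ring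
  have eQ' : ((5*n^2 + 1 : ℕ):ℤ) = 5*(n:ℤ)^2 + 1 := by push_cast; ring
  have eP' : ((11*n^2 + 6*n : ℕ):ℤ) = 11*(n:ℤ)^2 + 6*(n:ℤ) := by push_cast; ring
  have hc2 : (16:ℤ) ≤ (n:ℤ)^2 := by nlinarith
  have hc32 : 4*(n:ℤ)^2 ≤ (n:ℤ)^3 := by nlinarith [sq_nonneg (n:ℤ)]
  have hc43 : 4*(n:ℤ)^3 ≤ (n:ℤ)^4 := by nlinarith [sq_nonneg (n:ℤ), hc32]
  have hQH : 6*(n:ℤ) + 10 ≤ ((12*n^2 + 12*n + 1 : ℕ):ℤ) := by rw [eQ]; nlinarith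
  have hPH : 2*((12*n^2 + 12*n + 1 : ℕ):ℤ) + 6*(n:ℤ) + 8 ≤ ((25*n^2 + 30*n : ℕ):ℤ) := by
    rw [eQ, eP]; nlinarith [hc2, hc32, hc43, hn4]
  have hBH : 6*(n:ℤ)*(((25*n^2 + 30*n : ℕ):ℤ) - ((12*n^2 + 12*n + 1 : ℕ):ℤ))
      + 6*((12*n^2 + 12*n + 1 : ℕ):ℤ)
      < ((12*n^2 + 12*n + 1 : ℕ):ℤ) * ((12*n^2 + 12*n + 1 : ℕ):ℤ) := by
    rw [eQ, eP]; nlinarith [hc2, hc32, hc43, hn4]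
  have hQE : 6*(n:ℤ) + 10 ≤ ((5*n^2 + 1 : ℕ):ℤ) := by rw [eQ']; nlinarith
  have hPE : 2*((5*n^2 + 1 : ℕ):ℤ) + 6*(n:ℤ) + 8 ≤ ((11*n^2 + 6*n : ℕ):ℤ) := by
    rw [eQ', eP']; nlinarith [hc2, hc32, hc43, hn4]
  have hBE : 6*(n:ℤ)*(((11*n^2 + 6*n : ℕ):ℤ) - ((5*n^2 + 1 : ℕ):ℤ))
      + 6*((5*n^2 + 1 : ℕ):ℤ)
      < ((5*n^2 + 1 : ℕ):ℤ) * ((5*n^2 + 1 : ℕ):ℤ) := by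
    rw [eQ', eP']; nlinarith [hc2, hc32, hc43, hn4]
  -- link-sum bounds
  have h4m6n : 4*(m:ℤ) ≤ 6*(n:ℤ) := by linarith
  have htH : ∀ k : Fin n, |tH ep1 ep2 A k| ≤ 6*(n:ℤ) := fun k =>
    le_trans (abs_tH_le ep1 ep2 A k) h4m6n
  have htE : ∀ l : Fin m, |tE A l| ≤ 6*(n:ℤ) := fun l =>
    le_trans (abs_tE_le A l) h4m6n
  have heH6 : ∀ k : Fin n, |eH ep1 ep2 A k| ≤ 6 := fun k =>
    abs_eH_le6 ep1 ep2 A G hcubic hlt hedges hinj k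
  -- gadget packages
  have HD : ∀ k : Fin n, -8 ≤ aK1 A k + aK2 A k + aS1 A k + aS2 A k := fun k =>
    H_package ep1 ep2 A B hmax hn4 hQH hPH hBH k (htH k) (heH6 k)
  have ED : ∀ l : Fin m, -8 ≤ bK1 A l + bK2 A l + bS1 A l + bS2 A l ∧
      ((5*n^2 + 1 : ℕ):ℤ) - ((11*n^2 + 6*n : ℕ):ℤ) ≤ bK1 A l + bS1 A l := fun l =>
    E_package ep1 ep2 A B hmax hn4 hQE hPE hBE l (htE l)
  -- the flip of the link vertex
  have h0 := single_le ep1 ep2 A B hmax (.link lr s j)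
  rw [sgn_of_mem hLA, one_mul, NB_link, hidx] at h0
  rw [sum_if_lt_split_n (aK2 A) i, sum_if_lt_split_m (bK1 A) j] at h0
  -- merge gadget sums
  have hSH : (∑ k : Fin n, if i < k then aK1 A k + aK2 A k + aS1 A k + aS2 A k else 0)
      = (∑ k : Fin n, if i < k then aK1 A k else 0)
        + (∑ k : Fin n, if i < k then aK2 A k else 0)
        + (∑ k : Fin n, if i < k then aS1 A k else 0)
        + (∑ k : Fin n, if i < k then aS2 A k else 0) := by
    rw [sum_if_split, sum_if_split, sum_if_split]
  have hSE : (∑ l : Fin m, if l < j then bK1 A l + bK2 A l + bS1 A l + bS2 A l else 0)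
      = (∑ l : Fin m, if l < j then bK1 A l else 0)
        + (∑ l : Fin m, if l < j then bK2 A l else 0)
        + (∑ l : Fin m, if l < j then bS1 A l else 0)
        + (∑ l : Fin m, if l < j then bS2 A l else 0) := by
    rw [sum_if_split, sum_if_split, sum_if_split]
  -- bounds on the merged sums
  have hSHge : (-8)*(n:ℤ) ≤
      ∑ k : Fin n, if i < k then aK1 A k + aK2 A k + aS1 A k + aS2 A k else 0 := by
    calc (-8)*(n:ℤ) = ∑ _k : Fin n, (-8:ℤ) := by
          rw [Finset.sum_const, Finset.card_univ, Fintype.card_fin, nsmul_eq_mul]; ring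
      _ ≤ _ := Finset.sum_le_sum fun k _ => by
          split
          · exact HD k
          · norm_num
  have hSEge : (-8)*(m:ℤ) ≤
      ∑ l : Fin m, if l < j then bK1 A l + bK2 A l + bS1 A l + bS2 A l else 0 := by
    calc (-8)*(m:ℤ) = ∑ _l : Fin m, (-8:ℤ) := by
          rw [Finset.sum_const, Finset.card_univ, Fintype.card_fin, nsmul_eq_mul]; ring
      _ ≤ _ := Finset.sum_le_sum fun l _ => by
          split
          · exact (ED l).1
          · norm_num
  have haK2i : aK2 A i = ((12*n^2 + 12*n + 1 : ℕ):ℤ) :=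
    sum_sgn_of_all_mem A (fun aa => RVert.vK2 i aa) hK2A
  have hLL : -(4*(m:ℤ)) ≤ LL ep1 ep2 A lr s j := by
    have h1 := abs_LL_le ep1 ep2 A lr s j
    have h2 := neg_abs_le (LL ep1 ep2 A lr s j)
    linarith
  have hbK1j : -((5*n^2 + 1 : ℕ):ℤ) ≤ bK1 A j := by
    have h1 : |bK1 A j| ≤ ((5*n^2 + 1 : ℕ):ℤ) :=
      abs_part_le A (fun c : Fin (5*n^2 + 1) => RVert.eK1 j c)
    have h2 := neg_abs_le (bK1 A j)
    linarith
  -- conclude by arithmetic, splitting on lr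
  have hsq : 24*(n:ℤ) ≤ 6*(n:ℤ)^2 := by nlinarith
  cases lr with
  | false =>
      have hsp : ((5*n^2 + 1 : ℕ):ℤ) - ((11*n^2 + 6*n : ℕ):ℤ) ≤ bK1 A j + bS1 A j := (ED j).2
      simp only [if_pos rfl, if_true] at h0
      rw [eQ] at haK2i
      rw [eQ', eP'] at hsp
      linarith [h0, hSH, hSE, hSHge, hSEge, haK2i, hLL, hsp, hm23, hn4, hsq]
  | true =>
      have hlrne : ¬ (true = false) := by simp
      simp only [if_neg hlrne, if_false] at h0
      rw [eQ] at haK2i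
      rw [eQ'] at hbK1j
      linarith [h0, hSH, hSE, hSHge, hSEge, haK2i, hLL, hbK1j, hm23, hn4, hsq]
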